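/- arXiv:2408.13682 — 3 statements merged into one kernel-verified Lean document; each statement's English description precedes it below -/
import Mathlib

section
/- For positive integers M, N and complex numbers z_1, …, z_N, there exists k with M+1 ≤ k ≤ M+N such that |z_1^k + ⋯ + z_N^k| ≥ c_N · M^{-N} · max_j |z_j|^k, where c_N > 0 depends only on N. -/
open Polynomial Finset Complex Real

/-- the complex absolute value, as an absolute value (compatibility) -/
noncomputable def Complex.abs : AbsoluteValue ℂ ℝ := NormedField.toAbsoluteValue ℂ

lemma Complex.norm_eq_abs (x : ℂ) : ‖x‖ = Complex.abs x := rfl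

lemma Complex.abs_apply {x : ℂ} : Complex.abs x = Real.sqrt (Complex.normSq x) := Complex.norm_def x

lemma Complex.abs_conj (x : ℂ) : Complex.abs ((starRingEnd ℂ) x) = Complex.abs x := Complex.norm_conj x

lemma Complex.abs_ofReal (r : ℝ) : Complex.abs (r : ℂ) = |r| := Complex.norm_real r

lemma Complex.abs_mul_exp_arg_mul_I (x : ℂ) :
    ((Complex.abs x : ℝ) : ℂ) * Complex.exp (x.arg * Complex.I) = x := Complex.norm_mul_exp_arg_mul_I x

lemma Complex.sq_abs (x : ℂ) : Complex.abs x ^ 2 = Complex.normSq x := Complex.sq_norm x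

lemma Complex.abs_re_le_abs (x : ℂ) : |x.re| ≤ Complex.abs x := Complex.abs_re_le_norm x

/-- telescoping geometric identity -/
lemma geom_telescope (x : ℂ) (A B' : ℕ) (h : A ≤ B') :
    (∑ i ∈ Finset.Ico A B', x^i) * (1 - x) = x^A - x^B' := by
  induction B', h using Nat.le_induction with
  | base => simp
  | succ n hn ih =>
      rw [Finset.sum_Ico_succ_top (by omega), add_mul, ih]
      ring

/-- norm bound for geometric sums -/
lemma norm_geom_le (x : ℂ) (hx : Complex.abs x ≤ 1) (A B' : ℕ) :
    Complex.abs (∑ i ∈ Finset.Ico A B', x^i) * Complex.abs (1 - x) ≤ 2 := by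
  rcases le_or_gt A B' with h | h
  · rw [← map_mul, geom_telescope x A B' h]
    calc Complex.abs (x^A - x^B') ≤ Complex.abs (x^A) + Complex.abs (x^B') :=
          AbsoluteValue.sub_le_add _ _ _
      _ ≤ 1 + 1 := by
          rw [map_pow, map_pow]
          exact add_le_add (pow_le_one₀ (AbsoluteValue.nonneg _ _) hx)
            (pow_le_one₀ (AbsoluteValue.nonneg _ _) hx)
      _ = 2 := by norm_num
  · rw [Finset.Ico_eq_empty (by omega), Finset.sum_empty]
    simp

/-- real part of powers of a complex number with small-angle condition -/
lemma re_pow_nonneg (x : ℂ) (K : ℕ) (h : |x.arg| * K ≤ 1) : 0 ≤ (x^K).re := by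
  rcases eq_or_ne x 0 with rfl | hx
  · rcases Nat.eq_zero_or_pos K with rfl | hK
    · simp
    · rw [zero_pow (by omega)]; simp
  · have hxe := Complex.abs_mul_exp_arg_mul_I x
    have hxK : x ^ K = ((Complex.abs x ^ K : ℝ) : ℂ) * Complex.exp ((K * x.arg : ℝ) * Complex.I) := by
      conv_lhs => rw [← hxe]
      rw [mul_pow, ← Complex.exp_nat_mul]
      push_cast
      ring_nf
    rw [hxK, Complex.re_ofReal_mul, Complex.exp_ofReal_mul_I_re]
    apply mul_nonneg (pow_nonneg (AbsoluteValue.nonneg _ _) _)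
    apply Real.cos_nonneg_of_mem_Icc
    have h2 : |(K:ℝ) * x.arg| ≤ 1 := by
      rw [abs_mul, Nat.abs_cast, mul_comm]
      exact h
    have hpi : (2:ℝ) ≤ π := by have := Real.pi_gt_three; linarith
    have := abs_le.1 h2
    exact Set.mem_Icc.2 ⟨by linarith [this.1], by linarith [this.2]⟩

/-- sin t ≥ t/2 on [0, π/2] -/
lemma half_le_sin (t : ℝ) (h0 : 0 ≤ t) (h1 : t ≤ π/2) : t/2 ≤ Real.sin t := by
  rcases le_or_gt t 1 with h | h
  · rcases eq_or_lt_of_le h0 with rfl | h0'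
    · simp
    · have h3 := Real.sin_gt_sub_cube h0'
      have htt : t*t ≤ 1 := mul_le_one₀ h h0 h
      have h4 : t^3 ≤ t := by nlinarith
      linarith
  · have hcos : Real.sin t = Real.cos (π/2 - t) := (Real.cos_pi_div_two_sub t).symm
    set s := π/2 - t with hs
    have hs0 : 0 ≤ s := by rw [hs]; linarith
    have hpile : π < 3.15 := Real.pi_lt_d2
    have hsle : s ≤ 0.575 := by rw [hs]; linarith
    have hcos_ge : 1 - s^2/2 ≤ Real.cos s := by
      have hid : Real.cos s = 1 - 2 * Real.sin (s/2)^2 := by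
        have hc := Real.cos_two_mul (s/2)
        have hc2 := Real.sin_sq_add_cos_sq (s/2)
        rw [show 2*(s/2) = s by ring] at hc
        linarith
      have hsin_le : Real.sin (s/2) ≤ s/2 := Real.sin_le (by linarith)
      have hsin_nn : 0 ≤ Real.sin (s/2) := by
        apply Real.sin_nonneg_of_nonneg_of_le_pi (by linarith)
        nlinarith [Real.pi_gt_three]
      nlinarith
    rw [hcos]
    nlinarith

/-- lower bound on |1-x| via the argument -/
lemma arg_le_norm_one_sub (x : ℂ) (hx : Complex.abs x ≤ 1) :
    |x.arg| / 7 ≤ Complex.abs (1 - x) := by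
  have hargpi : |x.arg| ≤ π := Complex.abs_arg_le_pi x
  have hpile : π < 3.15 := Real.pi_lt_d2
  rcases le_or_gt (Complex.abs x) (1/2 : ℝ) with h | h
  · have h1 : (1:ℝ) - Complex.abs x ≤ Complex.abs (1 - x) := by
      have := norm_sub_norm_le (1:ℂ) x
      simpa [Complex.norm_eq_abs] using this
    linarith
  · have hx0 : x ≠ 0 := by
      intro h0; rw [h0] at h; simp at h; linarith
    have hre : x.re = Complex.abs x * Real.cos x.arg := by
      rw [Complex.cos_arg hx0]
      field_simp
      rfl
    have hnsq : Complex.normSq (1 - x) = 1 - 2 * x.re + Complex.normSq x := by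
      simp [Complex.normSq_apply, Complex.sub_re, Complex.sub_im, Complex.one_re, Complex.one_im]
      ring
    have hcos_id : Real.cos x.arg = 1 - 2 * Real.sin (x.arg/2)^2 := by
      have hc := Real.cos_two_mul (x.arg/2)
      have hc2 := Real.sin_sq_add_cos_sq (x.arg/2)
      rw [show 2*(x.arg/2) = x.arg by ring] at hc
      linarith
    have hsin_nn : 0 ≤ Real.sin (|x.arg|/2) := by
      apply Real.sin_nonneg_of_nonneg_of_le_pi (by positivity)
      linarith [Real.pi_pos]
    have hhalf : |x.arg|/4 ≤ Real.sin (|x.arg|/2) := by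
      have := half_le_sin (|x.arg|/2) (by positivity) (by linarith)
      linarith
    have hsin_abs : Real.sin (|x.arg|/2)^2 = Real.sin (x.arg/2)^2 := by
      rcases abs_cases x.arg with ⟨he, _⟩ | ⟨he, _⟩
      · rw [he]
      · rw [he, show -x.arg/2 = -(x.arg/2) by ring, Real.sin_neg]
        ring
    have h3 : (x.arg)^2/16 ≤ Real.sin (x.arg/2)^2 := by
      rw [← hsin_abs]
      have h4 : (|x.arg|/4)^2 ≤ Real.sin (|x.arg|/2)^2 :=
        sq_le_sq' (by linarith [abs_nonneg x.arg]) hhalf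
      have h5 : (|x.arg|/4)^2 = (x.arg)^2/16 := by
        rw [div_pow, _root_.sq_abs]; norm_num
      linarith
    have habs2 : Complex.normSq x = (Complex.abs x)^2 := (Complex.sq_abs x).symm
    have key : (x.arg)^2/8 ≤ Complex.normSq (1 - x) := by
      have h1 : Complex.normSq (1-x) = (1 - Complex.abs x)^2 + 2 * Complex.abs x * (1 - Real.cos x.arg) := by
        rw [hnsq, hre, habs2]; ring
      nlinarith [sq_nonneg (1 - Complex.abs x)]
    have h7 : (|x.arg|/7)^2 ≤ Complex.normSq (1-x) := by
      have : (|x.arg|/7)^2 = (x.arg)^2/49 := by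
        rw [div_pow, _root_.sq_abs]; norm_num
      nlinarith
    calc |x.arg|/7 = Real.sqrt ((|x.arg|/7)^2) := by rw [Real.sqrt_sq (by positivity)]
      _ ≤ Real.sqrt (Complex.normSq (1-x)) := Real.sqrt_le_sqrt h7
      _ = Complex.abs (1-x) := Complex.abs_apply.symm

/-- truncation decomposition of a polynomial -/
lemma trunc_decomp (f : Polynomial ℂ) (L : ℕ) :
    ∃ g : Polynomial ℂ, f = (∑ l ∈ Finset.range L, Polynomial.C (f.coeff l) * Polynomial.X^l) + Polynomial.X^L * g := by
  induction L with
  | zero => exact ⟨f, by simp⟩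
  | succ L ih =>
      obtain ⟨g, hg⟩ := ih
      have hcoeff : f.coeff L = g.coeff 0 := by
        rw [hg]
        rw [Polynomial.coeff_add]
        have h1 : (∑ l ∈ Finset.range L, Polynomial.C (f.coeff l) * Polynomial.X^l).coeff L = 0 := by
          rw [Polynomial.finset_sum_coeff]
          apply Finset.sum_eq_zero
          intro l hl
          rw [Polynomial.coeff_C_mul, Polynomial.coeff_X_pow]
          simp only [Finset.mem_range] at hl
          rw [if_neg (by omega)]
          ring
        have h2 : (Polynomial.X^L * g).coeff L = g.coeff 0 := by
          have := Polynomial.coeff_X_pow_mul g L 0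
          simpa using this
        rw [h1, h2, zero_add]
      refine ⟨g.divX, ?_⟩
      have hdiv : Polynomial.X * g.divX + Polynomial.C (g.coeff 0) = g := Polynomial.X_mul_divX_add g
      rw [Finset.sum_range_succ]
      calc f = (∑ l ∈ Finset.range L, Polynomial.C (f.coeff l) * Polynomial.X^l) + Polynomial.X^L * g := hg
        _ = (∑ l ∈ Finset.range L, Polynomial.C (f.coeff l) * Polynomial.X^l)
            + Polynomial.X^L * (Polynomial.X * g.divX + Polynomial.C (g.coeff 0)) := by rw [hdiv]
        _ = _ := by rw [hcoeff]; ring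

/-- product of (1 - c X^L) has the form 1 + X^L R -/
lemma prod_one_sub_pow {ι : Type*} [DecidableEq ι] (S : Finset ι) (c : ι → ℂ) (L : ℕ) :
    ∃ R : Polynomial ℂ, ∏ j ∈ S, (1 - Polynomial.C (c j) * Polynomial.X^L) = 1 + Polynomial.X^L * R := by
  induction S using Finset.induction_on with
  | empty => exact ⟨0, by simp⟩
  | @insert a s hj ih =>
      obtain ⟨R, hR⟩ := ih
      refine ⟨R - Polynomial.C (c a) - Polynomial.C (c a) * Polynomial.X^L * R, ?_⟩
      rw [Finset.prod_insert hj, hR]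
      ring

/-- geometric factor identity -/
lemma geom_factor (w : ℂ) (L : ℕ) :
    (1 - Polynomial.C w * Polynomial.X) * (∑ a ∈ Finset.range L, (Polynomial.C w * Polynomial.X)^a)
      = 1 - (Polynomial.C w * Polynomial.X)^L := by
  have := geom_sum_mul (Polynomial.C w * Polynomial.X) L
  have h2 : (1 - Polynomial.C w * Polynomial.X) * (∑ a ∈ Finset.range L, (Polynomial.C w * Polynomial.X)^a)
      = -((∑ a ∈ Finset.range L, (Polynomial.C w * Polynomial.X)^a) * ((Polynomial.C w * Polynomial.X) - 1)) := by ring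
  rw [h2, this]
  ring

section FMT
variable {ι : Type*} [DecidableEq ι]

/-- coefficients of a product of (1 - w X) with |w| ≤ 1 are bounded by 2^card -/
lemma coeff_prod_linear_le (S : Finset ι) (w : ι → ℂ) (hw : ∀ j ∈ S, Complex.abs (w j) ≤ 1) :
    ∀ i, Complex.abs ((∏ j ∈ S, (1 - Polynomial.C (w j) * Polynomial.X)).coeff i) ≤ 2 ^ S.card := by
  induction S using Finset.induction_on with
  | empty =>
      intro i
      simp only [Finset.prod_empty, Finset.card_empty, pow_zero]
      rcases Nat.eq_zero_or_pos i with rfl | hi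
      · simp
      · rw [Polynomial.coeff_one, if_neg (by omega)]
        simp
  | @insert a s ha ih =>
      intro i
      have hws : ∀ j ∈ s, Complex.abs (w j) ≤ 1 := fun j hj => hw j (Finset.mem_insert_of_mem hj)
      have hwa : Complex.abs (w a) ≤ 1 := hw a (Finset.mem_insert_self a s)
      set F := ∏ j ∈ s, (1 - Polynomial.C (w j) * Polynomial.X) with hF
      have ihF := ih hws
      rw [Finset.prod_insert ha, ← hF]
      have hexp : ((1 - Polynomial.C (w a) * Polynomial.X) * F).coeff i
          = F.coeff i - w a * ((Polynomial.X * F).coeff i) := by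
        rw [show (1 - Polynomial.C (w a) * Polynomial.X) * F
            = F - Polynomial.C (w a) * (Polynomial.X * F) by ring]
        rw [Polynomial.coeff_sub, Polynomial.coeff_C_mul]
      rw [hexp]
      have hXF : Complex.abs ((Polynomial.X * F).coeff i) ≤ 2 ^ s.card := by
        rcases Nat.eq_zero_or_pos i with rfl | hi
        · rw [Polynomial.coeff_X_mul_zero]
          simp
        · obtain ⟨i', rfl⟩ : ∃ i', i = i' + 1 := ⟨i - 1, by omega⟩
          rw [Polynomial.coeff_X_mul]
          exact ihF i'
      rw [Finset.card_insert_of_notMem ha, pow_succ]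
      have h1 : Complex.abs (F.coeff i - w a * ((Polynomial.X * F).coeff i))
          ≤ Complex.abs (F.coeff i) + Complex.abs (w a) * Complex.abs ((Polynomial.X * F).coeff i) := by
        rw [← map_mul]; exact AbsoluteValue.sub_le_add _ _ _
      have h2 : Complex.abs (w a) * Complex.abs ((Polynomial.X * F).coeff i) ≤ 1 * (2 ^ s.card) :=
        mul_le_mul hwa hXF (AbsoluteValue.nonneg _ _) zero_le_one
      have h3 := ihF i
      linarith [h1, h2, h3]

/-- coefficients of the truncated geometric series -/
lemma coeff_geom_single (w : ℂ) (L a : ℕ) :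
    (∑ b ∈ Finset.range (L+1), (Polynomial.C w * Polynomial.X)^b).coeff a
      = if a ≤ L then w ^ a else 0 := by
  rw [Polynomial.finset_sum_coeff]
  have hterm : ∀ b, ((Polynomial.C w * Polynomial.X)^b).coeff a = if a = b then w ^ a else 0 := by
    intro b
    rw [mul_pow, ← Polynomial.C_pow, Polynomial.coeff_C_mul, Polynomial.coeff_X_pow]
    by_cases h : a = b
    · rw [if_pos h, if_pos h, h]; ring
    · rw [if_neg h, if_neg h]; ring
  simp_rw [hterm]
  rw [Finset.sum_ite_eq (Finset.range (L+1)) a (fun _ => w ^ a)]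
  simp only [Finset.mem_range]
  by_cases h : a ≤ L
  · rw [if_pos (by omega), if_pos h]
  · rw [if_neg (by omega), if_neg h]

/-- coefficients of products of truncated geometric series -/
lemma coeff_prod_geom_le (S : Finset ι) (w : ι → ℂ) (hw : ∀ j ∈ S, Complex.abs (w j) ≤ 1) (L : ℕ) :
    ∀ l, Complex.abs ((∏ j ∈ S, (∑ b ∈ Finset.range (L+1), (Polynomial.C (w j) * Polynomial.X)^b)).coeff l)
      ≤ (L+1 : ℝ) ^ S.card := by
  induction S using Finset.induction_on with
  | empty =>
      intro l
      simp only [Finset.prod_empty, Finset.card_empty, pow_zero]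
      rcases Nat.eq_zero_or_pos l with rfl | hl
      · simp
      · rw [Polynomial.coeff_one, if_neg (by omega)]
        simp
  | @insert a s ha ih =>
      intro l
      have hws : ∀ j ∈ s, Complex.abs (w j) ≤ 1 := fun j hj => hw j (Finset.mem_insert_of_mem hj)
      have hwa : Complex.abs (w a) ≤ 1 := hw a (Finset.mem_insert_self a s)
      set F := ∏ j ∈ s, (∑ b ∈ Finset.range (L+1), (Polynomial.C (w j) * Polynomial.X)^b) with hF
      have ihF := ih hws
      rw [Finset.prod_insert ha, ← hF, Polynomial.coeff_mul]
      rw [Finset.Nat.sum_antidiagonal_eq_sum_range_succ_mk]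
      have h1 : Complex.abs (∑ k ∈ Finset.range (l+1),
              (∑ b ∈ Finset.range (L+1), (Polynomial.C (w a) * Polynomial.X)^b).coeff k * F.coeff (l - k))
          ≤ ∑ k ∈ Finset.range (l+1), Complex.abs
              ((∑ b ∈ Finset.range (L+1), (Polynomial.C (w a) * Polynomial.X)^b).coeff k * F.coeff (l - k)) :=
        AbsoluteValue.sum_le _ _ _
      have h2 : ∑ k ∈ Finset.range (l+1), Complex.abs
              ((∑ b ∈ Finset.range (L+1), (Polynomial.C (w a) * Polynomial.X)^b).coeff k * F.coeff (l - k))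
          ≤ ∑ k ∈ Finset.range (l+1), (if k ≤ L then (1:ℝ) else 0) * (L+1 : ℝ) ^ s.card := by
        apply Finset.sum_le_sum
        intro k _
        rw [map_mul, coeff_geom_single]
        by_cases h : k ≤ L
        · rw [if_pos h, if_pos h, one_mul]
          refine le_trans (mul_le_of_le_one_left (AbsoluteValue.nonneg _ _) ?_) (ihF _)
          rw [map_pow]
          exact pow_le_one₀ (AbsoluteValue.nonneg _ _) hwa
        · rw [if_neg h, if_neg h]
          simp
      have h3 : ∑ k ∈ Finset.range (l+1), (if k ≤ L then (1:ℝ) else 0) * (L+1 : ℝ) ^ s.card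
          ≤ (L+1 : ℝ) * (L+1 : ℝ) ^ s.card := by
        rw [← Finset.sum_mul]
        apply mul_le_mul_of_nonneg_right _ (by positivity)
        rw [Finset.sum_boole]
        have hsub : (Finset.range (l+1)).filter (fun k => k ≤ L) ⊆ Finset.range (L+1) := by
          intro k hk
          simp only [Finset.mem_filter, Finset.mem_range] at hk ⊢
          omega
        have := Finset.card_le_card hsub
        rw [Finset.card_range] at this
        exact_mod_cast Nat.cast_le.2 this
      have h4 : (L+1 : ℝ) * (L+1 : ℝ) ^ s.card = (L+1 : ℝ) ^ (insert a s).card := by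
        rw [Finset.card_insert_of_notMem ha, pow_succ]; ring
      linarith [h1, h2, h3]
end FMT

section FMTmain
variable {ι : Type*} [DecidableEq ι]

lemma coeff_X_pow_mul_lt (R : Polynomial ℂ) (L ν : ℕ) (h : ν < L) :
    (Polynomial.X^L * R).coeff ν = 0 := by
  rw [mul_comm, Polynomial.coeff_mul_X_pow']
  rw [if_neg (by omega)]

lemma coeff_trunc_sum (f : Polynomial ℂ) (L ν : ℕ) :
    ((∑ l ∈ Finset.range L, Polynomial.C (f.coeff l) * Polynomial.X^l).coeff ν)
      = if ν < L then f.coeff ν else 0 := by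
  rw [Polynomial.finset_sum_coeff]
  have hterm : ∀ l, (Polynomial.C (f.coeff l) * Polynomial.X^l).coeff ν
      = if ν = l then f.coeff ν else 0 := by
    intro l
    rw [Polynomial.coeff_C_mul, Polynomial.coeff_X_pow]
    by_cases h : ν = l
    · rw [if_pos h, if_pos h, h]; ring
    · rw [if_neg h, if_neg h]; ring
  simp_rw [hterm]
  rw [Finset.sum_ite_eq (Finset.range L) ν (fun _ => f.coeff ν)]
  simp only [Finset.mem_range]

/-- Turán's first main theorem (with crude constant) -/
lemma fmt (J : Finset ι) (hJ : J.Nonempty) (ζ : ι → ℂ)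
    (hζ : ∀ j ∈ J, 1 ≤ Complex.abs (ζ j)) (b : ι → ℂ) (M' : ℕ) :
    ∃ ν, M'+1 ≤ ν ∧ ν ≤ M' + J.card ∧
      Complex.abs (∑ j ∈ J, b j) ≤
        ((J.card : ℝ) * (J.card+1) * 2^J.card * (M'+1:ℝ)^J.card) * Complex.abs (∑ j ∈ J, b j * ζ j ^ ν) := by
  classical
  set m := J.card with hm
  have hm1 : 1 ≤ m := Finset.card_pos.2 hJ
  set w : ι → ℂ := fun j => (ζ j)⁻¹ with hwdef
  have hζ0 : ∀ j ∈ J, ζ j ≠ 0 := by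
    intro j hj h0
    have := hζ j hj
    rw [h0] at this; simp at this; linarith
  have hw : ∀ j ∈ J, Complex.abs (w j) ≤ 1 := by
    intro j hj
    rw [hwdef]
    simp only [map_inv₀]
    rw [inv_le_one_iff₀]
    right; exact hζ j hj
  set Q := ∏ j ∈ J, (1 - Polynomial.C (w j) * Polynomial.X) with hQ
  set Gp := ∏ j ∈ J, (∑ a ∈ Finset.range (M'+1), (Polynomial.C (w j) * Polynomial.X)^a) with hGp
  set T' := ∑ l ∈ Finset.range (M'+1), Polynomial.C (Gp.coeff l) * Polynomial.X^l with hT'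
  set P := Q * T' with hP
  -- structure of P
  have hQGp : ∃ R1, Q * Gp = 1 + Polynomial.X^(M'+1) * R1 := by
    have hprod : Q * Gp = ∏ j ∈ J, ((1 - Polynomial.C (w j) * Polynomial.X) *
        (∑ a ∈ Finset.range (M'+1), (Polynomial.C (w j) * Polynomial.X)^a)) := by
      rw [hQ, hGp, ← Finset.prod_mul_distrib]
    have hfac : ∀ j ∈ J, (1 - Polynomial.C (w j) * Polynomial.X) *
        (∑ a ∈ Finset.range (M'+1), (Polynomial.C (w j) * Polynomial.X)^a)
          = 1 - Polynomial.C ((w j)^(M'+1)) * Polynomial.X^(M'+1) := by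
      intro j _
      rw [geom_factor, mul_pow, Polynomial.C_pow]
    rw [hprod, Finset.prod_congr rfl hfac]
    exact prod_one_sub_pow J (fun j => (w j)^(M'+1)) (M'+1)
  obtain ⟨R1, hR1⟩ := hQGp
  obtain ⟨R2, hR2⟩ := trunc_decomp Gp (M'+1)
  rw [← hT'] at hR2
  have hPform : P = 1 + Polynomial.X^(M'+1) * (R1 - Q * R2) := by
    have hT'eq : T' = Gp - Polynomial.X^(M'+1) * R2 := by
      linear_combination -hR2
    rw [hP, hT'eq, mul_sub, hR1]
    ring
  -- coefficient structure
  have c0 : P.coeff 0 = 1 := by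
    rw [hPform, Polynomial.coeff_add, Polynomial.coeff_one,
      coeff_X_pow_mul_lt _ _ _ (by omega)]
    simp
  have cmid : ∀ ν, 1 ≤ ν → ν ≤ M' → P.coeff ν = 0 := by
    intro ν h1 h2
    rw [hPform, Polynomial.coeff_add, Polynomial.coeff_one,
      coeff_X_pow_mul_lt _ _ _ (by omega)]
    rw [if_neg (by omega)]
    simp
  -- degree bound
  have hdegQ : Q.natDegree ≤ m := by
    rw [hQ]
    refine le_trans (Polynomial.natDegree_prod_le _ _) ?_
    calc ∑ j ∈ J, (1 - Polynomial.C (w j) * Polynomial.X).natDegree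
        ≤ ∑ j ∈ J, 1 := by
          apply Finset.sum_le_sum
          intro j _
          refine le_trans (Polynomial.natDegree_sub_le _ _) ?_
          simp only [Polynomial.natDegree_one, max_le_iff]
          constructor
          · omega
          · exact le_trans (Polynomial.natDegree_C_mul_le _ _) (by rw [Polynomial.natDegree_X])
      _ = m := by rw [Finset.sum_const, smul_eq_mul, mul_one]
  have hdegT' : ∀ l, M' < l → T'.coeff l = 0 := by
    intro l hl
    rw [hT', coeff_trunc_sum, if_neg (by omega)]
  have chigh : ∀ ν, M' + m < ν → P.coeff ν = 0 := by
    intro ν hν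
    rw [hP, Polynomial.coeff_mul, Finset.Nat.sum_antidiagonal_eq_sum_range_succ_mk]
    apply Finset.sum_eq_zero
    intro k hk
    simp only [Finset.mem_range] at hk
    by_cases h : k ≤ m
    · rw [hdegT' (ν - k) (by omega)]; ring
    · rw [Polynomial.coeff_eq_zero_of_natDegree_lt (by omega : Q.natDegree < k)]; ring
  -- coefficient bound
  have cbound : ∀ ν, Complex.abs (P.coeff ν) ≤ ((m:ℝ)+1) * 2^m * (M'+1)^m := by
    intro ν
    rw [hP, Polynomial.coeff_mul, Finset.Nat.sum_antidiagonal_eq_sum_range_succ_mk]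
    have hQc : ∀ i, Complex.abs (Q.coeff i) ≤ 2^m := coeff_prod_linear_le J w hw
    have hT'c : ∀ l, Complex.abs (T'.coeff l) ≤ (M'+1:ℝ)^m := by
      intro l
      rw [hT', coeff_trunc_sum]
      by_cases h : l < M'+1
      · rw [if_pos h]; exact coeff_prod_geom_le J w hw M' l
      · rw [if_neg h]; simp; positivity
    have h1 : Complex.abs (∑ k ∈ Finset.range (ν+1), Q.coeff k * T'.coeff (ν - k))
        ≤ ∑ k ∈ Finset.range (ν+1), Complex.abs (Q.coeff k * T'.coeff (ν - k)) :=
      AbsoluteValue.sum_le _ _ _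
    have h2 : ∑ k ∈ Finset.range (ν+1), Complex.abs (Q.coeff k * T'.coeff (ν - k))
        ≤ ∑ k ∈ Finset.range (ν+1), (if k ≤ m then (1:ℝ) else 0) * (2^m * (M'+1:ℝ)^m) := by
      apply Finset.sum_le_sum
      intro k _
      rw [map_mul]
      by_cases h : k ≤ m
      · rw [if_pos h, one_mul]
        apply mul_le_mul (hQc k) (hT'c _) (AbsoluteValue.nonneg _ _) (by positivity)
      · rw [if_neg h, zero_mul]
        rw [Polynomial.coeff_eq_zero_of_natDegree_lt (by omega : Q.natDegree < k)]
        simp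
    have h3 : ∑ k ∈ Finset.range (ν+1), (if k ≤ m then (1:ℝ) else 0) * (2^m * (M'+1:ℝ)^m)
        ≤ ((m:ℝ)+1) * (2^m * (M'+1:ℝ)^m) := by
      rw [← Finset.sum_mul]
      apply mul_le_mul_of_nonneg_right _ (by positivity)
      rw [Finset.sum_boole]
      have hsub : (Finset.range (ν+1)).filter (fun k => k ≤ m) ⊆ Finset.range (m+1) := by
        intro k hk
        simp only [Finset.mem_filter, Finset.mem_range] at hk ⊢
        omega
      have := Finset.card_le_card hsub
      rw [Finset.card_range] at this
      exact_mod_cast Nat.cast_le.2 this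
    calc Complex.abs (∑ k ∈ Finset.range (ν+1), Q.coeff k * T'.coeff (ν - k))
        ≤ ((m:ℝ)+1) * (2^m * (M'+1:ℝ)^m) := by linarith
      _ = ((m:ℝ)+1) * 2^m * (M'+1)^m := by ring
  -- evaluation
  have evP : ∀ j ∈ J, P.eval (ζ j) = 0 := by
    intro j hj
    rw [hP, Polynomial.eval_mul]
    have : Q.eval (ζ j) = 0 := by
      rw [hQ, Polynomial.eval_prod]
      apply Finset.prod_eq_zero hj
      simp only [Polynomial.eval_sub, Polynomial.eval_one, Polynomial.eval_mul,
        Polynomial.eval_C, Polynomial.eval_X]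
      rw [hwdef]
      simp only []
      rw [inv_mul_cancel₀ (hζ0 j hj)]
      ring
    rw [this, zero_mul]
  have hdegP : P.natDegree < M' + m + 1 := by
    have h1 : P.natDegree ≤ Q.natDegree + T'.natDegree := Polynomial.natDegree_mul_le
    have h2 : T'.natDegree ≤ M' := Polynomial.natDegree_le_iff_coeff_eq_zero.2 hdegT'
    omega
  set W : ℕ → ℂ := fun ν => ∑ j ∈ J, b j * ζ j ^ ν with hWdef
  have hWν : ∀ ν, W ν = ∑ j ∈ J, b j * ζ j ^ ν := fun ν => rfl
  have hkey : ∑ ν ∈ Finset.range (M'+m+1), P.coeff ν * W ν = 0 := by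
    have h3 : ∀ j ∈ J, b j * P.eval (ζ j) = ∑ ν ∈ Finset.range (M'+m+1), P.coeff ν * (b j * ζ j ^ ν) := by
      intro j hj
      rw [Polynomial.eval_eq_sum_range' hdegP, Finset.mul_sum]
      apply Finset.sum_congr rfl
      intro ν _
      ring
    calc ∑ ν ∈ Finset.range (M'+m+1), P.coeff ν * W ν
        = ∑ ν ∈ Finset.range (M'+m+1), ∑ j ∈ J, P.coeff ν * (b j * ζ j ^ ν) := by
          apply Finset.sum_congr rfl
          intro ν _
          rw [hWν ν, Finset.mul_sum]
      _ = ∑ j ∈ J, ∑ ν ∈ Finset.range (M'+m+1), P.coeff ν * (b j * ζ j ^ ν) := Finset.sum_comm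
      _ = ∑ j ∈ J, b j * P.eval (ζ j) := by
          apply Finset.sum_congr rfl
          intro j hj
          rw [h3 j hj]
      _ = 0 := Finset.sum_eq_zero (fun j hj => by rw [evP j hj, mul_zero])
  have hsplit : W 0 = -∑ ν ∈ Finset.Ico (M'+1) (M'+m+1), P.coeff ν * W ν := by
    have e0 : ∑ ν ∈ Finset.Ico 0 1, P.coeff ν * W ν = W 0 := by
      rw [show Finset.Ico 0 1 = {0} by rfl, Finset.sum_singleton, c0, one_mul]
    have e1 : ∑ ν ∈ Finset.Ico 1 (M'+1), P.coeff ν * W ν = 0 := by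
      apply Finset.sum_eq_zero
      intro ν hν
      simp only [Finset.mem_Ico] at hν
      rw [cmid ν hν.1 (by omega), zero_mul]
    have e2 : ∑ ν ∈ Finset.Ico 0 1, P.coeff ν * W ν + ∑ ν ∈ Finset.Ico 1 (M'+1), P.coeff ν * W ν
        = ∑ ν ∈ Finset.Ico 0 (M'+1), P.coeff ν * W ν :=
      Finset.sum_Ico_consecutive _ (by omega) (by omega)
    have e3 : ∑ ν ∈ Finset.Ico 0 (M'+1), P.coeff ν * W ν
        + ∑ ν ∈ Finset.Ico (M'+1) (M'+m+1), P.coeff ν * W ν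
        = ∑ ν ∈ Finset.Ico 0 (M'+m+1), P.coeff ν * W ν :=
      Finset.sum_Ico_consecutive _ (by omega) (by omega)
    have e4 : ∑ ν ∈ Finset.Ico 0 (M'+m+1), P.coeff ν * W ν = 0 := by
      rw [← Finset.range_eq_Ico]
      exact hkey
    rw [e4] at e3
    rw [e0, e1, add_zero] at e2
    linear_combination e2 + e3
  have hIcoNe : (Finset.Ico (M'+1) (M'+m+1)).Nonempty := ⟨M'+1, Finset.mem_Ico.2 ⟨le_refl _, by omega⟩⟩
  obtain ⟨ν', hν'mem, hν'max⟩ := Finset.exists_max_image (Finset.Ico (M'+1) (M'+m+1))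
    (fun ν => Complex.abs (W ν)) hIcoNe
  simp only [Finset.mem_Ico] at hν'mem
  refine ⟨ν', hν'mem.1, by omega, ?_⟩
  have hW0 : Complex.abs (W 0) ≤ ((m:ℝ) * ((m+1) * 2^m * (M'+1)^m)) * Complex.abs (W ν') := by
    rw [hsplit, map_neg_eq_map]
    calc Complex.abs (∑ ν ∈ Finset.Ico (M'+1) (M'+m+1), P.coeff ν * W ν)
        ≤ ∑ ν ∈ Finset.Ico (M'+1) (M'+m+1), Complex.abs (P.coeff ν * W ν) :=
          AbsoluteValue.sum_le _ _ _
      _ ≤ ∑ ν ∈ Finset.Ico (M'+1) (M'+m+1), ((m:ℝ)+1) * 2^m * (M'+1)^m * Complex.abs (W ν') := by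
          apply Finset.sum_le_sum
          intro ν hν
          rw [map_mul]
          apply mul_le_mul (cbound ν) (hν'max ν hν) (AbsoluteValue.nonneg _ _) (le_trans (AbsoluteValue.nonneg _ _) (cbound ν))
      _ = ((m:ℝ) * ((m+1) * 2^m * (M'+1)^m)) * Complex.abs (W ν') := by
          rw [Finset.sum_const, Nat.card_Ico, nsmul_eq_mul]
          have : M' + m + 1 - (M' + 1) = m := by omega
          rw [this]
          ring
  have hW00 : W 0 = ∑ j ∈ J, b j := by
    rw [hWdef]
    apply Finset.sum_congr rfl
    intro j _
    rw [pow_zero, mul_one]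
  rw [hW00] at hW0
  have hWν' : W ν' = ∑ j ∈ J, b j * ζ j ^ ν' := hWν ν'
  rw [hWν'] at hW0
  calc Complex.abs (∑ j ∈ J, b j)
      ≤ ((m:ℝ) * ((m+1) * 2^m * (M'+1)^m)) * Complex.abs (∑ j ∈ J, b j * ζ j ^ ν') := hW0
    _ = ((m:ℝ) * (m+1) * 2^m * (M'+1:ℝ)^m) * Complex.abs (∑ j ∈ J, b j * ζ j ^ ν') := by
        ring
end FMTmain

section Step2

/-- coherent kernel: nonnegative real part -/
lemma kernel_coherent (x : ℂ) (T L2 : ℕ) (harg : |x.arg| * ((2*T + L2 : ℕ) : ℝ) ≤ 1) :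
    0 ≤ (((∑ a ∈ Finset.Ico T (2*T), x^a) * (∑ b ∈ Finset.range L2, x^b)).re) := by
  rw [Finset.sum_mul_sum]
  rw [Complex.re_sum]
  apply Finset.sum_nonneg
  intro a ha
  rw [Complex.re_sum]
  apply Finset.sum_nonneg
  intro b hb
  rw [← pow_add]
  apply re_pow_nonneg
  simp only [Finset.mem_Ico, Finset.mem_range] at ha hb
  have hle0 : a + b ≤ 2*T + L2 := by omega
  have hle : ((a + b : ℕ) : ℝ) ≤ ((2*T + L2 : ℕ) : ℝ) := Nat.cast_le.2 hle0
  calc |x.arg| * ((a + b : ℕ) : ℝ) ≤ |x.arg| * ((2*T + L2 : ℕ) : ℝ) :=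
        mul_le_mul_of_nonneg_left hle (abs_nonneg _)
    _ ≤ 1 := harg

/-- geometric sum bound in divided form -/
lemma norm_geom_le_div (x : ℂ) (hx : Complex.abs x ≤ 1) (ε : ℝ) (hε : 0 < ε)
    (hone : ε/7 ≤ Complex.abs (1 - x)) (A B' : ℕ) :
    Complex.abs (∑ i ∈ Finset.Ico A B', x^i) ≤ 14/ε := by
  have h0 : 0 < Complex.abs (1 - x) := lt_of_lt_of_le (by positivity) hone
  have h2 := norm_geom_le x hx A B'
  rw [← le_div_iff₀ h0] at h2
  calc Complex.abs (∑ i ∈ Finset.Ico A B', x^i) ≤ 2 / Complex.abs (1 - x) := h2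
    _ ≤ 2 / (ε/7) := by
        apply div_le_div_of_nonneg_left (by norm_num) (by positivity) hone
    _ = 14/ε := by field_simp; ring

/-- separated kernel: small absolute value -/
lemma kernel_sep (x : ℂ) (hx : Complex.abs x ≤ 1) (ε : ℝ) (hε : 0 < ε) (hsep : ε ≤ |x.arg|)
    (T L2 : ℕ) :
    Complex.abs ((∑ a ∈ Finset.Ico T (2*T), x^a) * (∑ b ∈ Finset.range L2, x^b)) ≤ (14/ε)^2 := by
  have hone : ε/7 ≤ Complex.abs (1 - x) := by
    have := arg_le_norm_one_sub x hx
    have h7 : ε/7 ≤ |x.arg|/7 := by linarith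
    linarith
  rw [map_mul]
  have h1 := norm_geom_le_div x hx ε hε hone T (2*T)
  have h2 : Complex.abs (∑ b ∈ Finset.range L2, x^b) ≤ 14/ε := by
    rw [Finset.range_eq_Ico]
    exact norm_geom_le_div x hx ε hε hone 0 L2
  calc Complex.abs (∑ a ∈ Finset.Ico T (2*T), x^a) * Complex.abs (∑ b ∈ Finset.range L2, x^b)
      ≤ (14/ε) * (14/ε) := mul_le_mul h1 h2 (AbsoluteValue.nonneg _ _) (by positivity)
    _ = (14/ε)^2 := by ring

end Step2

section Step2Main

lemma powersum_double_sum (N : ℕ) (z : Fin N → ℂ) (I Jb : Finset ℕ) :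
    ∑ a ∈ I, ∑ b ∈ Jb, ((∑ j, z j ^ (a+b)) * (starRingEnd ℂ) (∑ j, z j ^ (a+b)))
      = ∑ i, ∑ j, ((∑ a ∈ I, (z i * (starRingEnd ℂ) (z j))^a) * (∑ b ∈ Jb, (z i * (starRingEnd ℂ) (z j))^b)) := by
  have h1 : ∀ K : ℕ, ((∑ j, z j ^ K) * (starRingEnd ℂ) (∑ j, z j ^ K))
      = ∑ i, ∑ j, (z i * (starRingEnd ℂ) (z j))^K := by
    intro K
    have hc : (starRingEnd ℂ) (∑ j, z j ^ K) = ∑ j, ((starRingEnd ℂ) (z j))^K := by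
      rw [map_sum]
      apply Finset.sum_congr rfl
      intro j _
      rw [map_pow]
    rw [hc, Finset.sum_mul_sum]
    apply Finset.sum_congr rfl; intro i _
    apply Finset.sum_congr rfl; intro j _
    rw [mul_pow]
  have h2 : ∀ (i j : Fin N),
      (∑ a ∈ I, (z i * (starRingEnd ℂ) (z j))^a) * (∑ b ∈ Jb, (z i * (starRingEnd ℂ) (z j))^b)
        = ∑ a ∈ I, ∑ b ∈ Jb, (z i * (starRingEnd ℂ) (z j))^(a+b) := by
    intro i j
    rw [Finset.sum_mul_sum]
    apply Finset.sum_congr rfl; intro a _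
    apply Finset.sum_congr rfl; intro b _
    rw [pow_add]
  calc ∑ a ∈ I, ∑ b ∈ Jb, ((∑ j, z j ^ (a+b)) * (starRingEnd ℂ) (∑ j, z j ^ (a+b)))
      = ∑ a ∈ I, ∑ b ∈ Jb, ∑ i, ∑ j, (z i * (starRingEnd ℂ) (z j))^(a+b) := by
        apply Finset.sum_congr rfl; intro a _
        apply Finset.sum_congr rfl; intro b _
        exact h1 (a+b)
    _ = ∑ a ∈ I, ∑ i, ∑ b ∈ Jb, ∑ j, (z i * (starRingEnd ℂ) (z j))^(a+b) := by
        apply Finset.sum_congr rfl; intro a _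
        exact Finset.sum_comm
    _ = ∑ i, ∑ a ∈ I, ∑ b ∈ Jb, ∑ j, (z i * (starRingEnd ℂ) (z j))^(a+b) := Finset.sum_comm
    _ = ∑ i, ∑ a ∈ I, ∑ j, ∑ b ∈ Jb, (z i * (starRingEnd ℂ) (z j))^(a+b) := by
        apply Finset.sum_congr rfl; intro i _
        apply Finset.sum_congr rfl; intro a _
        exact Finset.sum_comm
    _ = ∑ i, ∑ j, ∑ a ∈ I, ∑ b ∈ Jb, (z i * (starRingEnd ℂ) (z j))^(a+b) := by
        apply Finset.sum_congr rfl; intro i _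
        exact Finset.sum_comm
    _ = _ := by
        apply Finset.sum_congr rfl; intro i _
        apply Finset.sum_congr rfl; intro j _
        exact (h2 i j).symm

set_option maxHeartbeats 2000000 in
/-- Step 2: some power sum in a long range is large -/
lemma exists_big_powersum (N M : ℕ) (hN : 0 < N) (z : Fin N → ℂ) (j0 : Fin N)
    (h1 : Complex.abs (z j0) = 1) (hle : ∀ j, Complex.abs (z j) ≤ 1) :
    ∃ K, M + N + 1 ≤ K ∧ K ≤ (200*N^2+4)^(N^2+1) * (M+N+1) ∧
      (2:ℝ) / (200*N^2+4) ≤ Complex.normSq (∑ j, z j ^ K) := by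
  classical
  set B : ℕ := 200*N^2+4 with hB
  have hBpos : 0 < B := by positivity
  have hB2 : 2 ≤ B := by omega
  set T0 : ℕ := M+N+1 with hT0
  have hT0pos : 0 < T0 := by omega
  set Tr : ℕ → ℝ := fun u => (T0:ℝ) * (B:ℝ)^u with hTr
  have hTrpos : ∀ u, 0 < Tr u := by
    intro u; rw [hTr]; positivity
  set α : Fin N × Fin N → ℝ :=
    fun p => |Complex.arg (z p.1 * (starRingEnd ℂ) (z p.2))| with hα
  set Band : ℕ → ℝ → Prop := fun u a => 1/((B:ℝ) * Tr u) < a ∧ a < 1/(Tr u) with hBand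
  have hdisj : ∀ u v a, u < v → Band u a → Band v a → False := by
    intro u v a huv hu hv
    have hle1 : (B:ℝ) * Tr u ≤ Tr v := by
      rw [hTr]
      simp only []
      rw [show (B:ℝ) * ((T0:ℝ) * (B:ℝ)^u) = (T0:ℝ) * (B:ℝ)^(u+1) by ring]
      apply mul_le_mul_of_nonneg_left _ (by positivity)
      apply pow_le_pow_right₀ (by exact_mod_cast hB2.trans' (by norm_num) : (1:ℝ) ≤ B)
      omega
    have h2 : 1/(Tr v) ≤ 1/((B:ℝ) * Tr u) := by
      apply one_div_le_one_div_of_le _ hle1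
      have := hTrpos u
      positivity
    rw [hBand] at hu hv
    have := hu.1
    have := hv.2
    linarith [hu.1, hv.2]
  -- pigeonhole: a good scale u*
  have hex_u : ∃ u, u ≤ N^2 ∧ ∀ p : Fin N × Fin N, p.1 ≠ p.2 → ¬ Band u (α p) := by
    set f : Fin N × Fin N → ℕ :=
      fun p => if h : ∃ v, v ≤ N^2 ∧ Band v (α p) then h.choose else N^2+1 with hf
    set pairsD : Finset (Fin N × Fin N) := Finset.univ.filter (fun p => p.1 ≠ p.2) with hpairs
    have hcard : (pairsD.image f).card ≤ N^2 := by
      refine le_trans Finset.card_image_le (le_trans (Finset.card_filter_le _ _) ?_)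
      rw [Finset.card_univ]
      simp [Fintype.card_prod, Fintype.card_fin]
      ring_nf
      omega
    have hns : ¬ (Finset.range (N^2+1) ⊆ pairsD.image f) := by
      intro hsub
      have := Finset.card_le_card hsub
      rw [Finset.card_range] at this
      omega
    obtain ⟨u, humem, hunot⟩ := Finset.not_subset.1 hns
    rw [Finset.mem_range] at humem
    refine ⟨u, by omega, ?_⟩
    intro p hp hband
    have hex : ∃ v, v ≤ N^2 ∧ Band v (α p) := ⟨u, by omega, hband⟩
    have hspec := hex.choose_spec
    have hequ : hex.choose = u := by
      rcases lt_trichotomy hex.choose u with h | h | h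
      · exact (hdisj _ _ _ h hspec.2 hband).elim
      · exact h
      · exact (hdisj _ _ _ h hband hspec.2).elim
    apply hunot
    apply Finset.mem_image.2
    refine ⟨p, ?_, ?_⟩
    · rw [hpairs]; simp [hp]
    · rw [hf]; simp only [dif_pos hex]; exact hequ
  obtain ⟨u, huN, hugood⟩ := hex_u
  -- the chosen scale
  set T : ℕ := T0 * B^u with hT
  have hTpos : 0 < T := by positivity
  have hTcast : (T:ℝ) = Tr u := by rw [hT, hTr]; push_cast; ring
  set L2 : ℕ := (200*N^2+2) * T with hL2
  have hL2pos : 0 < L2 := by positivity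
  set x : Fin N → Fin N → ℂ := fun i j => z i * (starRingEnd ℂ) (z j) with hx
  have hxabs : ∀ i j, Complex.abs (x i j) ≤ 1 := by
    intro i j
    rw [hx]
    simp only [map_mul, Complex.abs_conj]
    calc Complex.abs (z i) * Complex.abs (z j) ≤ 1 * 1 :=
          mul_le_mul (hle i) (hle j) (AbsoluteValue.nonneg _ _) zero_le_one
      _ = 1 := by norm_num
  set E : Fin N → Fin N → ℂ :=
    fun i j => (∑ a ∈ Finset.Ico T (2*T), (x i j)^a) * (∑ b ∈ Finset.range L2, (x i j)^b) with hE
  -- bound each term from below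
  have hterm : ∀ i j : Fin N, -(196*(T:ℝ)^2) ≤ (E i j).re := by
    intro i j
    rcases eq_or_ne i j with rfl | hij
    · -- diagonal: x real nonneg
      have hdiagarg : (x i i).arg = 0 := by
        rw [hx]
        simp only []
        rw [Complex.mul_conj]
        exact Complex.arg_ofReal_of_nonneg (Complex.normSq_nonneg _)
      have h0 := kernel_coherent (x i i) T L2 (by rw [hdiagarg]; simp)
      rw [hE]
      have : (0:ℝ) ≤ 196*(T:ℝ)^2 := by positivity
      simp only []
      linarith [h0]
    · -- off-diagonal
      have hnb := hugood (i, j) hij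
      by_cases hco : α (i, j) ≤ 1/((B:ℝ) * Tr u)
      · -- coherent
        have h0 := kernel_coherent (x i j) T L2 (by
          have h2TL : ((2*T + L2 : ℕ):ℝ) = (B:ℝ) * Tr u := by
            rw [← hTcast, hL2, hB]
            push_cast
            ring
          rw [h2TL]
          calc |(x i j).arg| * ((B:ℝ) * Tr u) ≤ (1/((B:ℝ) * Tr u)) * ((B:ℝ) * Tr u) := by
                apply mul_le_mul_of_nonneg_right _ (by positivity)
                exact hco
            _ = 1 := by
                field_simp
                exact div_self (hTrpos u).ne'
          )
        rw [hE]
        have : (0:ℝ) ≤ 196*(T:ℝ)^2 := by positivity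
        simp only []
        linarith [h0]
      · -- separated
        push_neg at hco
        have hsep : 1/(Tr u) ≤ α (i, j) := by
          rw [hBand] at hnb
          simp only [not_and, not_lt] at hnb
          exact hnb hco
        have hε : (0:ℝ) < 1/(Tr u) := by positivity
        have hker := kernel_sep (x i j) (hxabs i j) (1/(Tr u)) hε hsep T L2
        have h14 : (14/(1/(Tr u)))^2 = 196 * (Tr u)^2 := by
          field_simp
          ring
        rw [h14] at hker
        rw [hE]
        simp only []
        have hre := Complex.abs_re_le_abs ((∑ a ∈ Finset.Ico T (2*T), (x i j)^a) * (∑ b ∈ Finset.range L2, (x i j)^b))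
        rw [← hTcast] at hker
        have := abs_le.1 (le_trans hre hker)
        linarith [this.1]
  -- the diagonal term at j0
  have hdiag : (E j0 j0).re = (T:ℝ) * (L2:ℝ) := by
    have hx1 : x j0 j0 = 1 := by
      rw [hx]
      simp only []
      rw [Complex.mul_conj]
      have : Complex.normSq (z j0) = 1 := by
        rw [← Complex.sq_abs, h1]; norm_num
      rw [this]
      norm_num
    rw [hE]
    simp only [hx1, one_pow]
    rw [Finset.sum_const, Finset.sum_const, Nat.card_Ico, Finset.card_range]
    have h2T : 2*T - T = T := by omega
    rw [h2T]
    simp only [nsmul_eq_mul, mul_one]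
    push_cast
    simp
  -- total sum identity
  set Sz : ℕ → ℂ := fun K => ∑ j, z j ^ K with hSz
  have hident : ∑ a ∈ Finset.Ico T (2*T), ∑ b ∈ Finset.range L2, Complex.normSq (Sz (a+b))
      = ∑ i, ∑ j, (E i j).re := by
    have hns : ∀ K, Complex.normSq (Sz K) = (Sz K * (starRingEnd ℂ) (Sz K)).re := by
      intro K
      rw [Complex.mul_conj]
      exact (Complex.ofReal_re _).symm
    calc ∑ a ∈ Finset.Ico T (2*T), ∑ b ∈ Finset.range L2, Complex.normSq (Sz (a+b))
        = ∑ a ∈ Finset.Ico T (2*T), ∑ b ∈ Finset.range L2, (Sz (a+b) * (starRingEnd ℂ) (Sz (a+b))).re := by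
          apply Finset.sum_congr rfl; intro a _
          apply Finset.sum_congr rfl; intro b _
          exact hns (a+b)
      _ = (∑ a ∈ Finset.Ico T (2*T), ∑ b ∈ Finset.range L2, (Sz (a+b) * (starRingEnd ℂ) (Sz (a+b)))).re := by
          rw [Complex.re_sum]
          apply Finset.sum_congr rfl; intro a _
          rw [Complex.re_sum]
      _ = (∑ i, ∑ j, E i j).re := by
          rw [hSz, hE]
          simp only []
          rw [powersum_double_sum N z (Finset.Ico T (2*T)) (Finset.range L2)]
      _ = ∑ i, ∑ j, (E i j).re := by
          rw [Complex.re_sum]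
          apply Finset.sum_congr rfl; intro i _
          rw [Complex.re_sum]
  -- lower bound for the total
  have hlow : 2*(T:ℝ)^2 ≤ ∑ i, ∑ j, (E i j).re := by
    have hprodsum : ∑ p ∈ Finset.univ ×ˢ Finset.univ, (E p.1 p.2).re = ∑ i, ∑ j, (E i j).re :=
      Finset.sum_product' (s := Finset.univ) (t := Finset.univ) (f := fun i j => (E i j).re)
    have hmem : (j0, j0) ∈ (Finset.univ ×ˢ Finset.univ : Finset (Fin N × Fin N)) := by
      simp [Finset.mem_product]
    have hsplit := Finset.add_sum_erase (Finset.univ ×ˢ Finset.univ) (fun p => (E p.1 p.2).re) hmem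
    have herase : ((Finset.univ ×ˢ Finset.univ : Finset (Fin N × Fin N)).erase (j0, j0)).card • (-(196*(T:ℝ)^2))
        ≤ ∑ p ∈ (Finset.univ ×ˢ Finset.univ : Finset (Fin N × Fin N)).erase (j0, j0), (E p.1 p.2).re := by
      apply Finset.card_nsmul_le_sum
      intro p _
      exact hterm p.1 p.2
    have hcarderase : ((Finset.univ ×ˢ Finset.univ : Finset (Fin N × Fin N)).erase (j0, j0)).card ≤ N*N := by
      refine le_trans (Finset.card_erase_le) ?_
      rw [Finset.card_product, Finset.card_univ, Fintype.card_fin]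
    have herase2 : -((N:ℝ)*(N:ℝ)*(196*(T:ℝ)^2))
        ≤ ∑ p ∈ (Finset.univ ×ˢ Finset.univ : Finset (Fin N × Fin N)).erase (j0, j0), (E p.1 p.2).re := by
      refine le_trans ?_ herase
      rw [nsmul_eq_mul]
      have hc : (((Finset.univ ×ˢ Finset.univ : Finset (Fin N × Fin N)).erase (j0, j0)).card : ℝ) ≤ (N:ℝ)*(N:ℝ) := by
        exact_mod_cast Nat.cast_le.2 hcarderase
      have hpos : (0:ℝ) ≤ 196*(T:ℝ)^2 := by positivity
      nlinarith
    have hL2cast : (L2:ℝ) = (200*(N:ℝ)^2+2) * (T:ℝ) := by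
      rw [hL2]; push_cast; ring
    have hdiagval : (T:ℝ)*(L2:ℝ) = (200*(N:ℝ)^2+2)*(T:ℝ)^2 := by
      rw [hL2cast]; ring
    calc 2*(T:ℝ)^2 ≤ (200*(N:ℝ)^2+2)*(T:ℝ)^2 - (N:ℝ)*(N:ℝ)*(196*(T:ℝ)^2) := by nlinarith [sq_nonneg (T:ℝ), sq_nonneg (N:ℝ)]
      _ ≤ (E j0 j0).re + ∑ p ∈ (Finset.univ ×ˢ Finset.univ : Finset (Fin N × Fin N)).erase (j0, j0), (E p.1 p.2).re := by
          rw [hdiag, hdiagval]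
          linarith [herase2]
      _ = ∑ p ∈ Finset.univ ×ˢ Finset.univ, (E p.1 p.2).re := hsplit
      _ = ∑ i, ∑ j, (E i j).re := hprodsum
  -- extract the max
  have hprodne : ((Finset.Ico T (2*T)) ×ˢ (Finset.range L2)).Nonempty := by
    refine ⟨(T, 0), ?_⟩
    rw [Finset.mem_product]
    constructor
    · rw [Finset.mem_Ico]; omega
    · rw [Finset.mem_range]; omega
  obtain ⟨pm, hpmmem, hpmmax⟩ := Finset.exists_max_image _
    (fun p : ℕ × ℕ => Complex.normSq (Sz (p.1 + p.2))) hprodne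
  rw [Finset.mem_product, Finset.mem_Ico, Finset.mem_range] at hpmmem
  have hsum_le : ∑ p ∈ (Finset.Ico T (2*T)) ×ˢ (Finset.range L2), Complex.normSq (Sz (p.1+p.2))
      ≤ ((T:ℝ)*(L2:ℝ)) * Complex.normSq (Sz (pm.1+pm.2)) := by
    calc ∑ p ∈ (Finset.Ico T (2*T)) ×ˢ (Finset.range L2), Complex.normSq (Sz (p.1+p.2))
        ≤ ∑ _p ∈ (Finset.Ico T (2*T)) ×ˢ (Finset.range L2), Complex.normSq (Sz (pm.1+pm.2)) := by
          apply Finset.sum_le_sum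
          intro p hp
          exact hpmmax p hp
      _ = ((Finset.Ico T (2*T)) ×ˢ (Finset.range L2)).card • Complex.normSq (Sz (pm.1+pm.2)) := by
          rw [Finset.sum_const]
      _ = ((T:ℝ)*(L2:ℝ)) * Complex.normSq (Sz (pm.1+pm.2)) := by
          rw [Finset.card_product, Nat.card_Ico, Finset.card_range, nsmul_eq_mul]
          have h2T : 2*T - T = T := by omega
          rw [h2T]
          push_cast
          ring
  have hsum_eq : ∑ p ∈ (Finset.Ico T (2*T)) ×ˢ (Finset.range L2), Complex.normSq (Sz (p.1+p.2))
      = ∑ a ∈ Finset.Ico T (2*T), ∑ b ∈ Finset.range L2, Complex.normSq (Sz (a+b)) :=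
    Finset.sum_product' (s := Finset.Ico T (2*T)) (t := Finset.range L2)
      (f := fun a b => Complex.normSq (Sz (a+b)))
  have hval : (2:ℝ)/(200*(N:ℝ)^2+4) ≤ Complex.normSq (Sz (pm.1+pm.2)) := by
    have hchain : 2*(T:ℝ)^2 ≤ ((T:ℝ)*(L2:ℝ)) * Complex.normSq (Sz (pm.1+pm.2)) := by
      rw [← hident] at hlow
      rw [← hsum_eq] at hlow
      linarith [hsum_le]
    have hL2cast : (L2:ℝ) = (200*(N:ℝ)^2+2) * (T:ℝ) := by
      rw [hL2]; push_cast; ring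
    rw [hL2cast] at hchain
    have hTposR : (0:ℝ) < (T:ℝ) := by exact_mod_cast hTpos
    have hv0 : 0 ≤ Complex.normSq (Sz (pm.1+pm.2)) := Complex.normSq_nonneg _
    have hchain2 : 2 * (T:ℝ)^2 ≤ ((200*(N:ℝ)^2+2) * Complex.normSq (Sz (pm.1+pm.2))) * (T:ℝ)^2 := by
      nlinarith [hchain]
    have h2le : (2:ℝ) ≤ (200*(N:ℝ)^2+2) * Complex.normSq (Sz (pm.1+pm.2)) :=
      (mul_le_mul_iff_of_pos_right (by positivity : (0:ℝ) < (T:ℝ)^2)).1 hchain2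
    rw [div_le_iff₀ (by positivity)]
    nlinarith [h2le, hv0, mul_nonneg hv0 (sq_nonneg (N:ℝ))]
  refine ⟨pm.1 + pm.2, ?_, ?_, ?_⟩
  · have hTT : T0 ≤ T := by
      rw [hT]
      calc T0 = T0 * 1 := (mul_one T0).symm
        _ ≤ T0 * B^u := Nat.mul_le_mul (le_refl T0) (Nat.one_le_pow _ _ hBpos)
    omega
  · have hKle : pm.1 + pm.2 ≤ B * T := by
      have : 2*T + L2 = B * T := by rw [hL2, hB]; ring
      omega
    have hBT : B * T ≤ B^(N^2+1) * T0 := by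
      rw [hT]
      calc B * (T0 * B^u) = B^(u+1) * T0 := by ring
        _ ≤ B^(N^2+1) * T0 := by
            apply Nat.mul_le_mul_right
            apply Nat.pow_le_pow_right (by omega)
            omega
    calc pm.1 + pm.2 ≤ B * T := hKle
      _ ≤ B^(N^2+1) * T0 := hBT
      _ = (200*N^2+4)^(N^2+1) * (M+N+1) := by rw [hB, hT0]
  · exact hval

end Step2Main

noncomputable def turanConst (N : ℕ) : ℝ :=
  Real.sqrt (2/(200*(N:ℝ)^2+4)) /
    ((N:ℝ) * ((N:ℝ)+1) * 2^N * ((200*(N:ℝ)^2+4)^(N^2+1) * ((N:ℝ)+2))^N)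

lemma turanConst_pos (N : ℕ) (hN : 0 < N) : 0 < turanConst N := by
  rw [turanConst]
  have h1 : (0:ℝ) < (N:ℝ) := by exact_mod_cast hN
  positivity

set_option maxHeartbeats 2000000 in
lemma turan_normalized (N : ℕ) (hN : 0 < N) (M : ℕ) (hM : 0 < M) (z : Fin N → ℂ)
    (j0 : Fin N) (h1 : Complex.abs (z j0) = 1) (hle : ∀ j, Complex.abs (z j) ≤ 1) :
    ∃ k, M + 1 ≤ k ∧ k ≤ M + N ∧
      turanConst N * ((M:ℝ)^N)⁻¹ ≤ Complex.abs (∑ j, z j ^ k) := by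
  classical
  obtain ⟨K, hK1, hK2, hKbig⟩ := exists_big_powersum N M hN z j0 h1 hle
  -- the set of nonzero nodes
  set J : Finset (Fin N) := Finset.univ.filter (fun j => z j ≠ 0) with hJ
  have hj0J : j0 ∈ J := by
    rw [hJ]
    simp only [Finset.mem_filter, Finset.mem_univ, true_and]
    intro h0
    rw [h0] at h1
    simp at h1
  have hJne : J.Nonempty := ⟨j0, hj0J⟩
  set m : ℕ := J.card with hm
  have hm1 : 1 ≤ m := Finset.card_pos.2 hJne
  have hmN : m ≤ N := by
    rw [hm, hJ]
    refine le_trans (Finset.card_filter_le _ _) ?_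
    rw [Finset.card_univ, Fintype.card_fin]
  have hzJ : ∀ j ∈ J, z j ≠ 0 := by
    intro j hj
    rw [hJ] at hj
    simpa using hj
  -- M'
  have hKM : M + m + 1 ≤ K := by omega
  set M' : ℕ := K - (M + m + 1) with hM'
  have hM'K : M' + (M + m + 1) = K := by omega
  -- inverted nodes
  set ζ : Fin N → ℂ := fun j => z j0 / z j with hζdef
  have hζ : ∀ j ∈ J, 1 ≤ Complex.abs (ζ j) := by
    intro j hj
    rw [hζdef]
    simp only [map_div₀, h1]
    rw [le_div_iff₀ (by
      have := hzJ j hj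
      have h0 := AbsoluteValue.pos Complex.abs this
      exact h0)]
    rw [one_mul]
    exact hle j
  set b : Fin N → ℂ := fun j => z j ^ K with hbdef
  obtain ⟨ν, hν1, hν2, hfmt⟩ := fmt J hJne ζ hζ b M'
  -- the found exponent
  set k : ℕ := K - ν with hk
  have hνK : ν < K := by omega
  have hkM : M + 1 ≤ k := by omega
  have hkMN : k ≤ M + N := by omega
  refine ⟨k, hkM, hkMN, ?_⟩
  -- identify the two sums
  have hsum0 : ∑ j ∈ J, b j = ∑ j, z j ^ K := by
    rw [hbdef]
    apply Finset.sum_subset (Finset.subset_univ J)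
    intro j _ hj
    rw [hJ] at hj
    simp only [Finset.mem_filter, Finset.mem_univ, true_and, not_not] at hj
    rw [hj]
    exact zero_pow (by omega)
  have hsumν : ∑ j ∈ J, b j * ζ j ^ ν = z j0 ^ ν * ∑ j, z j ^ k := by
    have hterm : ∀ j ∈ J, b j * ζ j ^ ν = z j0 ^ ν * z j ^ k := by
      intro j hj
      rw [hbdef, hζdef]
      simp only [div_pow]
      rw [hk]
      rw [pow_sub₀ (z j) (hzJ j hj) (by omega : ν ≤ K)]
      field_simp
    rw [Finset.sum_congr rfl hterm, ← Finset.mul_sum]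
    congr 1
    apply Finset.sum_subset (Finset.subset_univ J)
    intro j _ hj
    rw [hJ] at hj
    simp only [Finset.mem_filter, Finset.mem_univ, true_and, not_not] at hj
    rw [hj]
    exact zero_pow (by omega)
  rw [hsum0, hsumν] at hfmt
  have habsν : Complex.abs (z j0 ^ ν * ∑ j, z j ^ k) = Complex.abs (∑ j, z j ^ k) := by
    rw [map_mul, map_pow, h1, one_pow, one_mul]
  rw [habsν] at hfmt
  -- lower bound for |S K|
  have hSK : Real.sqrt (2/(200*(N:ℝ)^2+4)) ≤ Complex.abs (∑ j, z j ^ K) := by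
    rw [Complex.abs_apply]
    exact Real.sqrt_le_sqrt hKbig
  -- constant chain
  set X : ℝ := (200*(N:ℝ)^2+4)^(N^2+1) * ((N:ℝ)+2) with hX
  have hbase : (1:ℝ) ≤ 200*(N:ℝ)^2+4 := by nlinarith [sq_nonneg (N:ℝ)]
  have hp1 : (1:ℝ) ≤ (200*(N:ℝ)^2+4)^(N^2+1) := one_le_pow₀ hbase
  have hX1 : 1 ≤ X := by
    rw [hX]
    nlinarith [hp1, Nat.cast_nonneg (α := ℝ) N]
  have hMR1 : (1:ℝ) ≤ (M:ℝ) := by exact_mod_cast hM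
  have hXM1 : (1:ℝ) ≤ X * (M:ℝ) := by nlinarith [hX1, hMR1]
  -- M' + 1 ≤ X * M
  have hM'nat : M' + 1 ≤ (200*N^2+4)^(N^2+1) * ((N+2)*M) := by
    have hNM : N ≤ N*M := Nat.le_mul_of_pos_right N hM
    have hMN1 : M + N + 1 ≤ (N+2)*M := by
      have : (N+2)*M = N*M + 2*M := by ring
      omega
    have hKle : K ≤ (200*N^2+4)^(N^2+1) * ((N+2)*M) := by
      refine le_trans hK2 ?_
      exact Nat.mul_le_mul_left _ hMN1
    omega
  have hM'1 : ((M':ℝ)+1) ≤ X * (M:ℝ) := by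
    have := (Nat.cast_le (α := ℝ)).2 hM'nat
    push_cast at this
    rw [hX]
    calc ((M':ℝ)+1) ≤ (200*(N:ℝ)^2+4)^(N^2+1) * (((N:ℝ)+2)*(M:ℝ)) := this
      _ = (200*(N:ℝ)^2+4)^(N^2+1) * ((N:ℝ)+2) * (M:ℝ) := by ring
  -- bound the fmt constant
  have hMM : ((M':ℝ)+1)^m ≤ (X*(M:ℝ))^N :=
    le_trans (pow_le_pow_left₀ (by positivity) hM'1 m) (pow_le_pow_right₀ hXM1 hmN)
  have hmR : ((m:ℝ)) ≤ (N:ℝ) := Nat.cast_le.2 hmN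
  have h2m : (2:ℝ)^m ≤ 2^N := pow_le_pow_right₀ one_le_two hmN
  have hCb_le : (m:ℝ)*((m:ℝ)+1)*2^m*((M':ℝ)+1)^m ≤ (N:ℝ)*((N:ℝ)+1)*2^N*(X*(M:ℝ))^N := by
    have h0m : (0:ℝ) ≤ (m:ℝ) := Nat.cast_nonneg m
    have hpos1 : (0:ℝ) ≤ ((M':ℝ)+1)^m := by positivity
    have hpos2 : (0:ℝ) ≤ (2:ℝ)^m := by positivity
    apply mul_le_mul
    · apply mul_le_mul
      · apply mul_le_mul hmR (by linarith) (by linarith) (Nat.cast_nonneg N)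
      · exact h2m
      · positivity
      · positivity
    · exact hMM
    · positivity
    · positivity
  -- combine
  set D : ℝ := (N:ℝ)*((N:ℝ)+1)*2^N*X^N with hD
  have hDpos : 0 < D := by
    rw [hD]
    have h1 : (0:ℝ) < (N:ℝ) := by exact_mod_cast hN
    have hXpos : (0:ℝ) < X := lt_of_lt_of_le one_pos hX1
    positivity
  have hDM : (N:ℝ)*((N:ℝ)+1)*2^N*(X*(M:ℝ))^N = D * (M:ℝ)^N := by
    rw [hD, mul_pow]; ring
  have habs_nonneg : 0 ≤ Complex.abs (∑ j, z j ^ k) := AbsoluteValue.nonneg _ _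
  have hchain : Real.sqrt (2/(200*(N:ℝ)^2+4)) ≤ (D * (M:ℝ)^N) * Complex.abs (∑ j, z j ^ k) := by
    calc Real.sqrt (2/(200*(N:ℝ)^2+4)) ≤ Complex.abs (∑ j, z j ^ K) := hSK
      _ ≤ ((m:ℝ)*((m:ℝ)+1)*2^m*((M':ℝ)+1)^m) * Complex.abs (∑ j, z j ^ k) := hfmt
      _ ≤ ((N:ℝ)*((N:ℝ)+1)*2^N*(X*(M:ℝ))^N) * Complex.abs (∑ j, z j ^ k) :=
          mul_le_mul_of_nonneg_right hCb_le habs_nonneg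
      _ = (D * (M:ℝ)^N) * Complex.abs (∑ j, z j ^ k) := by rw [hDM]
  have hMpow : (0:ℝ) < (M:ℝ)^N := by positivity
  have hgoal : turanConst N * ((M:ℝ)^N)⁻¹ = Real.sqrt (2/(200*(N:ℝ)^2+4)) / (D * (M:ℝ)^N) := by
    rw [turanConst, hD, hX]
    rw [division_def, division_def, mul_assoc, ← mul_inv]
    rw [div_eq_mul_inv]
  rw [hgoal, div_le_iff₀ (by positivity)]
  linarith [hchain]

/-- Turán's second theorem for power sums: for any positive integers `M, N` and
complex numbers `z₁, …, z_N`, some power sum with exponent `k ∈ [M+1, M+N]`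
satisfies `|Σ z_j^k| ≥ c_N · M^{-N} · max_j |z_j|^k`. -/
theorem turan_power_sum (N : ℕ) (hN : 0 < N) :
    ∃ c : ℝ, 0 < c ∧
      ∀ (M : ℕ), 0 < M → ∀ (z : Fin N → ℂ),
        ∃ k, M + 1 ≤ k ∧ k ≤ M + N ∧
          ∀ j, c * ((M : ℝ) ^ N)⁻¹ * ‖z j‖ ^ k ≤
            ‖∑ j', z j' ^ k‖ := by
  simp only [Complex.norm_eq_abs]
  refine ⟨turanConst N, turanConst_pos N hN, ?_⟩
  intro M hM z
  obtain ⟨jm, -, hjm⟩ := Finset.exists_max_image Finset.univ (fun j => Complex.abs (z j))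
    ⟨⟨0, hN⟩, Finset.mem_univ _⟩
  have hjm' : ∀ j, Complex.abs (z j) ≤ Complex.abs (z jm) := fun j => hjm j (Finset.mem_univ j)
  set R : ℝ := Complex.abs (z jm) with hR
  rcases eq_or_lt_of_le (AbsoluteValue.nonneg Complex.abs (z jm)) with hR0 | hRpos
  · -- all z_j = 0
    refine ⟨M+1, le_refl _, by omega, ?_⟩
    intro j
    have hz : Complex.abs (z j) = 0 := le_antisymm (by
        have := hjm' j
        rw [hR, ← hR0] at this
        exact this)
      (AbsoluteValue.nonneg _ _)
    rw [hz, zero_pow (by omega : M+1 ≠ 0), mul_zero]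
    exact AbsoluteValue.nonneg _ _
  · -- scale by R
    set w : Fin N → ℂ := fun j => z j / (R:ℂ) with hw
    have hRC : (R:ℂ) ≠ 0 := by
      simp only [ne_eq, Complex.ofReal_eq_zero]
      linarith
    have habsw : ∀ j, Complex.abs (w j) = Complex.abs (z j) / R := by
      intro j
      rw [hw]
      simp only [map_div₀, Complex.abs_ofReal]
      rw [abs_of_pos hRpos]
    have hwle : ∀ j, Complex.abs (w j) ≤ 1 := by
      intro j
      rw [habsw j, div_le_one hRpos]
      exact hjm' j
    have hwjm : Complex.abs (w jm) = 1 := by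
      rw [habsw jm, ← hR, div_self (by linarith)]
    obtain ⟨k, hk1, hk2, hbound⟩ := turan_normalized N hN M hM w jm hwjm hwle
    refine ⟨k, hk1, hk2, ?_⟩
    intro j
    have hzw : ∀ j', z j' = (R:ℂ) * w j' := by
      intro j'
      rw [hw]
      field_simp
    have hsum : ∑ j', z j' ^ k = (R:ℂ)^k * ∑ j', w j' ^ k := by
      rw [Finset.mul_sum]
      apply Finset.sum_congr rfl
      intro j' _
      rw [hzw j', mul_pow]
    have habs_sum : Complex.abs (∑ j', z j' ^ k) = R^k * Complex.abs (∑ j', w j' ^ k) := by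
      rw [hsum, map_mul, map_pow, Complex.abs_ofReal, abs_of_pos hRpos]
    rw [habs_sum]
    have hzjR : Complex.abs (z j) ^ k ≤ R^k :=
      pow_le_pow_left₀ (AbsoluteValue.nonneg _ _) (hjm' j) k
    have hcpos : 0 < turanConst N * ((M:ℝ)^N)⁻¹ := by
      have := turanConst_pos N hN
      have : (0:ℝ) < ((M:ℝ)^N)⁻¹ := by positivity
      positivity
    calc turanConst N * ((M:ℝ)^N)⁻¹ * Complex.abs (z j) ^ k
        ≤ turanConst N * ((M:ℝ)^N)⁻¹ * R^k := by
          apply mul_le_mul_of_nonneg_left hzjR (le_of_lt hcpos)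
      _ = R^k * (turanConst N * ((M:ℝ)^N)⁻¹) := by ring
      _ ≤ R^k * Complex.abs (∑ j', w j' ^ k) := by
          apply mul_le_mul_of_nonneg_left hbound (by positivity)
end

section
/- Let I be a finite set and for each i ∈ I let (α_{i,j})_{j=1}^n be complex numbers with |α_{i,j}| < p^{1/2} for a prime p. Define for i, i' ∈ I the formal power series exp( Σ_{q≥1} ( Σ_j α_{i,j}^q )·conj( Σ_j α_{i',j}^q ) X^q / q ) = Σ_{k≥0} c_{i,i'}(k) X^k. Then for every k ≥ 0 the matrix (c_{i,i'}(k))_{i,i'∈I} is Hermitian positive semidefinite, and moreover for k ≥ 1 and any weights w_i ∈ ℂ, Σ_{i,i'} w_i conj(w_{i'}) c_{i,i'}(k) ≥ (1/k) |Σ_i w_i Σ_j α_{i,j}^k|². -/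
open scoped ComplexOrder
open Finset

/-- Local computation at an unramified prime: the power-series coefficients of
`exp( Σ_{q≥1} (Σ_j α_{i,j}^q) conj(Σ_j α_{i',j}^q) X^q / q )` form positive
semidefinite Hermitian matrices, with the explicit lower bound
`Σ_{i,i'} w_i conj(w_{i'}) c_{i,i'}(k) ≥ (1/k) |Σ_i w_i Σ_j α_{i,j}^k|²`. -/
theorem local_rankin_selberg_nonneg_definite {I : Type*} [Fintype I]
    (p : ℕ) (hp : p.Prime) (n : ℕ) (α : I → Fin n → ℂ)
    (hα : ∀ i j, ‖α i j‖ < Real.sqrt p)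
    (S : I → I → PowerSeries ℂ)
    (hS : ∀ i i', S i i' = PowerSeries.mk fun q =>
      if q = 0 then 0
      else ((∑ j, α i j ^ q) * starRingEnd ℂ (∑ j, α i' j ^ q)) / (q : ℂ))
    (c : I → I → ℕ → ℂ)
    (hc : ∀ i i' k, c i i' k =
      ∑ ℓ ∈ Finset.range (k + 1),
        (PowerSeries.coeff k ((S i i') ^ ℓ)) / (Nat.factorial ℓ : ℂ)) :
    (∀ k, (Matrix.of fun i i' => c i i' k).PosSemidef) ∧
    (∀ k : ℕ, 1 ≤ k → ∀ w : I → ℂ,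
      (1 / (k : ℝ)) * ‖∑ i, w i * ∑ j, α i j ^ k‖ ^ 2 ≤
        (∑ i, ∑ i', w i * starRingEnd ℂ (w i') * c i i' k).re) := by
  classical
  -- the square-root normalized coefficients
  set u : ℕ → I → ℂ := fun q i =>
    if q = 0 then 0 else (∑ j, α i j ^ q) / ((Real.sqrt q : ℝ) : ℂ) with hu_def
  have hsq : ∀ q : ℕ, q ≠ 0 →
      ((Real.sqrt q : ℝ) : ℂ) * ((Real.sqrt q : ℝ) : ℂ) = (q : ℂ) := by
    intro q hq
    rw [← Complex.ofReal_mul, Real.mul_self_sqrt (by positivity)]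
    push_cast; rfl
  have hu : ∀ q (i i' : I),
      PowerSeries.coeff q (S i i') = u q i * starRingEnd ℂ (u q i') := by
    intro q i i'
    rw [hS, PowerSeries.coeff_mk]
    by_cases hq : q = 0
    · simp [hu_def, hq]
    · simp only [hu_def, if_neg hq]
      rw [map_div₀, Complex.conj_ofReal, div_mul_div_comm, hsq q hq]
  -- quadratic form attached to the `ℓ`-th power
  have hQ : ∀ (k : ℕ) (w : I → ℂ) (ℓ : ℕ),
      ∑ i, ∑ i', w i * starRingEnd ℂ (w i') * PowerSeries.coeff k ((S i i') ^ ℓ) =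
        ((∑ l ∈ finsuppAntidiag (range ℓ) k,
          Complex.normSq (∑ i, w i * ∏ m ∈ range ℓ, u (l m) i) : ℝ) : ℂ) := by
    intro k w ℓ
    have h1 : ∀ i i', w i * starRingEnd ℂ (w i') * PowerSeries.coeff k ((S i i') ^ ℓ) =
        ∑ l ∈ finsuppAntidiag (range ℓ) k,
          (w i * ∏ m ∈ range ℓ, u (l m) i) *
            starRingEnd ℂ (w i' * ∏ m ∈ range ℓ, u (l m) i') := by
      intro i i'
      rw [PowerSeries.coeff_pow, mul_sum]
      refine sum_congr rfl fun l _ => ?_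
      simp only [hu, prod_mul_distrib, ← map_prod, map_mul]
      ring
    calc ∑ i, ∑ i', w i * starRingEnd ℂ (w i') * PowerSeries.coeff k ((S i i') ^ ℓ)
        = ∑ i, ∑ l ∈ finsuppAntidiag (range ℓ) k, ∑ i',
            (w i * ∏ m ∈ range ℓ, u (l m) i) *
              starRingEnd ℂ (w i' * ∏ m ∈ range ℓ, u (l m) i') := by
          exact sum_congr rfl fun i _ => by rw [Finset.sum_congr rfl (fun i' _ => h1 i i')]; exact sum_comm
      _ = ∑ l ∈ finsuppAntidiag (range ℓ) k, ∑ i, ∑ i',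
            (w i * ∏ m ∈ range ℓ, u (l m) i) *
              starRingEnd ℂ (w i' * ∏ m ∈ range ℓ, u (l m) i') := sum_comm
      _ = ((∑ l ∈ finsuppAntidiag (range ℓ) k,
            Complex.normSq (∑ i, w i * ∏ m ∈ range ℓ, u (l m) i) : ℝ) : ℂ) := by
          push_cast
          refine sum_congr rfl fun l _ => ?_
          rw [← Finset.sum_mul_sum, ← map_sum, Complex.mul_conj]
  -- the full quadratic form
  have hT : ∀ (k : ℕ) (w : I → ℂ),
      ∑ i, ∑ i', w i * starRingEnd ℂ (w i') * c i i' k =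
        ((∑ ℓ ∈ range (k + 1), (∑ l ∈ finsuppAntidiag (range ℓ) k,
          Complex.normSq (∑ i, w i * ∏ m ∈ range ℓ, u (l m) i)) / (Nat.factorial ℓ : ℝ) : ℝ)
          : ℂ) := by
    intro k w
    have h1 : ∀ i i', w i * starRingEnd ℂ (w i') * c i i' k =
        ∑ ℓ ∈ range (k + 1),
          (w i * starRingEnd ℂ (w i') * PowerSeries.coeff k ((S i i') ^ ℓ)) /
            (Nat.factorial ℓ : ℂ) := by
      intro i i'
      rw [hc, mul_sum]
      exact sum_congr rfl fun ℓ _ => (mul_div_assoc _ _ _).symm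
    calc ∑ i, ∑ i', w i * starRingEnd ℂ (w i') * c i i' k
        = ∑ ℓ ∈ range (k + 1), ∑ i, ∑ i',
            (w i * starRingEnd ℂ (w i') * PowerSeries.coeff k ((S i i') ^ ℓ)) /
              (Nat.factorial ℓ : ℂ) := by
          rw [show ∑ i, ∑ i', w i * starRingEnd ℂ (w i') * c i i' k
              = ∑ i, ∑ ℓ ∈ range (k + 1), ∑ i',
                (w i * starRingEnd ℂ (w i') * PowerSeries.coeff k ((S i i') ^ ℓ)) /
                  (Nat.factorial ℓ : ℂ) from
            sum_congr rfl fun i _ => by rw [Finset.sum_congr rfl (fun i' _ => h1 i i')]; exact sum_comm]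
          exact sum_comm
      _ = ((∑ ℓ ∈ range (k + 1), (∑ l ∈ finsuppAntidiag (range ℓ) k,
            Complex.normSq (∑ i, w i * ∏ m ∈ range ℓ, u (l m) i)) / (Nat.factorial ℓ : ℝ) : ℝ)
            : ℂ) := by
          push_cast
          refine sum_congr rfl fun ℓ _ => ?_
          simp_rw [← Finset.sum_div]
          rw [hQ k w ℓ]
          push_cast
          rfl
  constructor
  · intro k
    refine Matrix.PosSemidef.of_dotProduct_mulVec_nonneg ?_ ?_
    · -- Hermitian
      have hmap : ∀ i i', S i' i = PowerSeries.map (starRingEnd ℂ) (S i i') := by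
        intro i i'
        ext q
        rw [PowerSeries.coeff_map, hu, hu, map_mul, Complex.conj_conj, mul_comm]
      ext i i'
      simp only [Matrix.conjTranspose_apply, Matrix.of_apply, RCLike.star_def]
      rw [hc, hc, map_sum]
      refine sum_congr rfl fun ℓ _ => ?_
      rw [hmap, ← map_pow, PowerSeries.coeff_map, map_div₀, Complex.conj_conj]
      congr 1
      simp
    · -- nonnegativity
      intro x
      have hx : dotProduct (star x)
            (Matrix.mulVec (Matrix.of fun i i' => c i i' k) x) =
          ∑ i, ∑ i', (star x) i * starRingEnd ℂ ((star x) i') * c i i' k := by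
        simp only [dotProduct, Matrix.mulVec, Pi.star_apply, Matrix.of_apply,
          Finset.mul_sum, RCLike.star_def, Complex.conj_conj]
        refine sum_congr rfl fun i _ => sum_congr rfl fun i' _ => ?_
        ring
      rw [hx, hT k (star x)]
      rw [Complex.zero_le_real]
      refine Finset.sum_nonneg fun ℓ _ => div_nonneg
        (Finset.sum_nonneg fun l _ => Complex.normSq_nonneg _) (by positivity)
  · intro k hk w
    rw [hT k w, Complex.ofReal_re]
    have hnn : ∀ ℓ ∈ range (k + 1),
        0 ≤ (∑ l ∈ finsuppAntidiag (range ℓ) k,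
          Complex.normSq (∑ i, w i * ∏ m ∈ range ℓ, u (l m) i)) / (Nat.factorial ℓ : ℝ) := by
      intro ℓ _
      exact div_nonneg (Finset.sum_nonneg fun l _ => Complex.normSq_nonneg _) (by positivity)
    refine le_trans ?_ (Finset.single_le_sum hnn (by simp [Nat.lt_succ_of_le hk] :
      (1 : ℕ) ∈ range (k + 1)))
    have hk0 : k ≠ 0 := by omega
    -- compute the ℓ = 1 term
    have hQ1 : ∑ i, ∑ i', w i * starRingEnd ℂ (w i') * PowerSeries.coeff k ((S i i') ^ 1) =
        ((‖∑ i, w i * ∑ j, α i j ^ k‖ ^ 2 / k : ℝ) : ℂ) := by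
      simp_rw [pow_one, hu]
      have h2 : ∀ i i' : I, w i * starRingEnd ℂ (w i') * (u k i * starRingEnd ℂ (u k i')) =
          (w i * u k i) * starRingEnd ℂ (w i' * u k i') := by
        intro i i'; rw [map_mul]; ring
      simp_rw [h2]
      rw [← Finset.sum_mul_sum, ← map_sum, Complex.mul_conj]
      have hz : ∑ i, w i * u k i =
          (∑ i, w i * ∑ j, α i j ^ k) / ((Real.sqrt k : ℝ) : ℂ) := by
        rw [Finset.sum_div]
        refine sum_congr rfl fun i _ => ?_
        simp only [hu_def, if_neg hk0, mul_div_assoc]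
      rw [hz, Complex.normSq_div]
      congr 1
      rw [Complex.normSq_eq_norm_sq, Complex.normSq_ofReal,
        Real.mul_self_sqrt (by positivity)]
    have h3 := (hQ k w 1).symm.trans hQ1
    have heq : (∑ l ∈ finsuppAntidiag (range 1) k,
        Complex.normSq (∑ i, w i * ∏ m ∈ range 1, u (l m) i) : ℝ) =
        ‖∑ i, w i * ∑ j, α i j ^ k‖ ^ 2 / k := by
      exact_mod_cast h3
    rw [heq, Nat.factorial_one, Nat.cast_one, div_one, one_div, inv_mul_eq_div]
end

section
/- Let s, z be complex numbers with Re s ≤ C, Re z ≤ C, and Re(1 - s + z) ≥ ε > 0, and suppose additionally Re s ≥ -C. Then |Γ_ℝ(1 - s + conj(z)) / Γ_ℝ(s + z)| ≪_{ε,C} (1 + |Im(s + z)|)^{1/2 - Re s}, where Γ_ℝ(w) = π^{-w/2} Γ(w/2). -/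
set_option maxHeartbeats 1000000

open Real Filter Finset

private noncomputable def GG (y u : ℝ) : ℝ := Real.log (1 + y^2 / u^2)

private lemma GG_hasDeriv (y : ℝ) {t : ℝ} (ht : 0 < t) :
    HasDerivAt (GG y) (-(2 * y^2 / (t * (t^2 + y^2)))) t := by
  have h2 : HasDerivAt (fun u : ℝ => u^2) (2*t) t := by
    simpa using (hasDerivAt_pow 2 t)
  have h1 := ((h2.inv (by positivity)).const_mul (y^2)).const_add 1
  have hpos : (0:ℝ) < 1 + y^2 / t^2 := by positivity
  have h3 := h1.log (by
    simpa [div_eq_mul_inv] using hpos.ne')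
  have : HasDerivAt (GG y) (y ^ 2 * (-(2*t) / (t ^ 2) ^ 2) / (1 + y ^ 2 * (t ^ 2)⁻¹)) t := by
    have h4 : GG y = fun u => Real.log (1 + y^2/u^2) := rfl
    rw [h4]; simpa [div_eq_mul_inv] using h3
  convert this using 1
  field_simp

private lemma GG_antitone_aux (y : ℝ) {t1 t2 : ℝ} (h1 : 0 < t1) (h2 : t1 ≤ t2) :
    2 * y^2 / (t2 * (t2^2 + y^2)) ≤ 2 * y^2 / (t1 * (t1^2 + y^2)) := by
  apply div_le_div_of_nonneg_left (by positivity) (by positivity)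
  nlinarith [sq_nonneg y, sq_nonneg (t1+t2)]

private lemma GG_convex_step (y b θ : ℝ) (hb : 2 ≤ b) (hθ0 : 0 ≤ θ) (hθ1 : θ ≤ 1) :
    GG y b - GG y (b + θ) ≤ θ * (GG y (b-1) - GG y b) := by
  rcases eq_or_lt_of_le hθ0 with h | hθpos
  · simp [← h]
  · -- MVT on [b, b+θ]
    obtain ⟨c1, hc1, hc1'⟩ := exists_hasDerivAt_eq_slope (GG y)
      (fun t => -(2 * y^2 / (t * (t^2 + y^2)))) (by linarith : b < b + θ)
      (fun t ht => (GG_hasDeriv y (by rcases ht with ⟨h,_⟩; linarith)).continuousAt.continuousWithinAt)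
      (fun t ht => GG_hasDeriv y (by rcases ht with ⟨h,_⟩; linarith))
    obtain ⟨c2, hc2, hc2'⟩ := exists_hasDerivAt_eq_slope (GG y)
      (fun t => -(2 * y^2 / (t * (t^2 + y^2)))) (by linarith : b - 1 < b)
      (fun t ht => (GG_hasDeriv y (by rcases ht with ⟨h,_⟩; linarith)).continuousAt.continuousWithinAt)
      (fun t ht => GG_hasDeriv y (by rcases ht with ⟨h,_⟩; linarith))
    rcases hc1 with ⟨hc1a, hc1b⟩
    rcases hc2 with ⟨hc2a, hc2b⟩
    have e1 : GG y b - GG y (b+θ) = θ * (2 * y^2 / (c1 * (c1^2 + y^2))) := by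
      have h := hc1'.symm
      rw [div_eq_iff (by linarith : b + θ - b ≠ 0)] at h
      linear_combination -h
    have e2 : GG y (b-1) - GG y b = 2 * y^2 / (c2 * (c2^2 + y^2)) := by
      have h := hc2'.symm
      rw [div_eq_iff (by linarith : b - (b-1) ≠ 0)] at h
      linear_combination -h
    rw [e1, e2]
    have := GG_antitone_aux y (by linarith : (0:ℝ) < c2) (by linarith : c2 ≤ c1)
    exact mul_le_mul_of_nonneg_left this hθ0

private lemma GG_sum (x y θ : ℝ) (hx : 2 ≤ x) (hθ0 : 0 ≤ θ) (hθ1 : θ ≤ 1) (n : ℕ) :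
    ∑ j ∈ range n, (GG y (x+j) - GG y (x+j+θ)) ≤ θ * Real.log (1 + y^2) := by
  have step : ∀ j ∈ range n, GG y (x+j) - GG y (x+j+θ) ≤
      θ * (GG y (x-1+j) - GG y (x-1+(j+1))) := by
    intro j _
    have hj : (0:ℝ) ≤ (j:ℝ) := Nat.cast_nonneg j
    have h := GG_convex_step y (x+(j:ℝ)) θ (by linarith) hθ0 hθ1
    have e1 : x - 1 + (j:ℝ) = x + (j:ℝ) - 1 := by ring
    have e2 : x - 1 + ((j:ℝ)+1) = x + (j:ℝ) := by ring
    rw [e1, e2]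
    exact h
  have tele := Finset.sum_range_sub' (fun k : ℕ => GG y (x-1+(k:ℝ))) n
  simp only [Nat.cast_add, Nat.cast_one, Nat.cast_zero, add_zero] at tele
  calc ∑ j ∈ range n, (GG y (x+j) - GG y (x+j+θ))
      ≤ ∑ j ∈ range n, θ * (GG y (x-1+j) - GG y (x-1+(j+1))) := Finset.sum_le_sum step
    _ = θ * (GG y (x-1) - GG y (x-1+n)) := by rw [← Finset.mul_sum, tele]
    _ ≤ θ * Real.log (1 + y^2) := by
        apply mul_le_mul_of_nonneg_left _ hθ0
        have h1 : GG y (x-1+(n:ℝ)) ≥ 0 := Real.log_nonneg (by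
          have : (0:ℝ) ≤ y^2/(x-1+(n:ℝ))^2 := by positivity
          linarith)
        have h2 : GG y (x-1) ≤ Real.log (1+y^2) := by
          apply Real.log_le_log (by positivity)
          have h3 : (1:ℝ) ≤ (x-1)^2 := by nlinarith
          have h4 : y^2/(x-1)^2 ≤ y^2 := by
            rw [div_le_iff₀ (by nlinarith)]
            nlinarith [sq_nonneg y]
          linarith
        linarith

private lemma prod_A (x y θ : ℝ) (hx : 2 ≤ x) (hθ0 : 0 ≤ θ) (hθ1 : θ ≤ 1) (n : ℕ) :
    ∏ j ∈ range n, (1+y^2/(x+j)^2) ≤ (1+y^2)^θ * ∏ j ∈ range n, (1+y^2/(x+j+θ)^2) := by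
  have hL : ∏ j ∈ range n, (1+y^2/(x+j)^2) = Real.exp (∑ j ∈ range n, GG y (x+j)) := by
    rw [Real.exp_sum]
    exact Finset.prod_congr rfl fun j _ => (Real.exp_log (by positivity)).symm
  have hR : ∏ j ∈ range n, (1+y^2/(x+j+θ)^2) = Real.exp (∑ j ∈ range n, GG y (x+j+θ)) := by
    rw [Real.exp_sum]
    exact Finset.prod_congr rfl fun j _ => (Real.exp_log (by positivity)).symm
  rw [hL, hR, Real.rpow_def_of_pos (by positivity), ← Real.exp_add, Real.exp_le_exp]
  have := GG_sum x y θ hx hθ0 hθ1 n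
  rw [Finset.sum_sub_distrib] at this
  linarith

private lemma prod_abs_le (w : ℂ) (hw : 2 ≤ w.re) {θ : ℝ} (hθ0 : 0 ≤ θ) (hθ1 : θ ≤ 1) (n : ℕ) :
    (∏ j ∈ range n, (w.re+θ+j)) * ∏ j ∈ range n, ‖w+j‖ ≤
      (1+|w.im|)^θ * ((∏ j ∈ range n, (w.re+j)) * ∏ j ∈ range n, ‖w+(θ:ℂ)+j‖) := by
  set x := w.re with hx
  set y := w.im with hy
  have hxj : ∀ j : ℕ, (0:ℝ) < x + j := fun j => by
    have : (0:ℝ) ≤ (j:ℝ) := Nat.cast_nonneg j; linarith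
  have hxθj : ∀ j : ℕ, (0:ℝ) < x + θ + j := fun j => by
    have : (0:ℝ) ≤ (j:ℝ) := Nat.cast_nonneg j; linarith
  have habs1 : ∀ j : ℕ, (‖w+j‖)^2 = (x+j)^2 * (1+y^2/(x+j)^2) := by
    intro j
    rw [Complex.sq_norm, Complex.normSq_apply]
    have h1 : (w+(j:ℂ)).re = x + j := by simp [hx]
    have h2 : (w+(j:ℂ)).im = y := by simp [hy]
    rw [h1, h2]
    field_simp
  have habs2 : ∀ j : ℕ, (‖w+(θ:ℂ)+j‖)^2 = (x+θ+j)^2 * (1+y^2/(x+θ+j)^2) := by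
    intro j
    rw [Complex.sq_norm, Complex.normSq_apply]
    have h1 : (w+(θ:ℂ)+(j:ℂ)).re = x + θ + j := by simp [hx]
    have h2 : (w+(θ:ℂ)+(j:ℂ)).im = y := by simp [hy]
    rw [h1, h2]
    field_simp
  have hbase : (0:ℝ) ≤ 1 + |y| := by positivity
  set c : ℝ := (1+|y|)^θ with hc
  have hcpos : 0 < c := Real.rpow_pos_of_pos (by positivity) θ
  -- squared inequality
  have key : ((∏ j ∈ range n, (x+θ+j)) * ∏ j ∈ range n, ‖w+j‖)^2 ≤
      (c * ((∏ j ∈ range n, (x+j)) * ∏ j ∈ range n, ‖w+(θ:ℂ)+j‖))^2 := by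
    have e1 : (∏ j ∈ range n, ‖w+j‖)^2 =
        (∏ j ∈ range n, (x+j)^2) * ∏ j ∈ range n, (1+y^2/(x+j)^2) := by
      rw [← Finset.prod_pow, ← Finset.prod_mul_distrib]
      exact Finset.prod_congr rfl fun j _ => habs1 j
    have e2 : (∏ j ∈ range n, ‖w+(θ:ℂ)+j‖)^2 =
        (∏ j ∈ range n, (x+θ+j)^2) * ∏ j ∈ range n, (1+y^2/(x+θ+j)^2) := by
      rw [← Finset.prod_pow, ← Finset.prod_mul_distrib]
      exact Finset.prod_congr rfl fun j _ => habs2 j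
    have hcsq : c^2 = ((1+|y|)^2 : ℝ)^θ := by
      rw [hc, ← Real.rpow_natCast (1+|y|) 2, ← Real.rpow_mul hbase,
        ← Real.rpow_natCast ((1+|y|)^θ) 2, ← Real.rpow_mul hbase, mul_comm]
    have hbb : (1+y^2)^θ ≤ ((1+|y|)^2 : ℝ)^θ := by
      apply Real.rpow_le_rpow (by positivity) _ hθ0
      nlinarith [sq_abs y, abs_nonneg y]
    have main : ∏ j ∈ range n, (1+y^2/(x+j)^2) ≤
        c^2 * ∏ j ∈ range n, (1+y^2/(x+j+θ)^2) := by
      rw [hcsq]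
      calc ∏ j ∈ range n, (1+y^2/(x+j)^2)
          ≤ (1+y^2)^θ * ∏ j ∈ range n, (1+y^2/(x+j+θ)^2) :=
            prod_A x y θ hw hθ0 hθ1 n
        _ ≤ ((1+|y|)^2 : ℝ)^θ * ∏ j ∈ range n, (1+y^2/(x+j+θ)^2) := by
            apply mul_le_mul_of_nonneg_right hbb
            exact Finset.prod_nonneg fun j _ => by positivity
    have harg : ∀ j : ℕ, x + θ + (j:ℝ) = x + (j:ℝ) + θ := fun j => by ring
    have main' : ∏ j ∈ range n, (1+y^2/(x+j)^2) ≤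
        c^2 * ∏ j ∈ range n, (1+y^2/(x+θ+j)^2) := by
      convert main using 3 with j hj
      rw [harg j]
    have hPP : 0 ≤ (∏ j ∈ range n, (x+θ+j)^2) * (∏ j ∈ range n, (x+j)^2) := by
      apply mul_nonneg <;> exact Finset.prod_nonneg fun j _ => sq_nonneg _
    calc ((∏ j ∈ range n, (x+θ+j)) * ∏ j ∈ range n, ‖w+j‖)^2
        = (∏ j ∈ range n, (x+θ+j))^2 * (∏ j ∈ range n, ‖w+j‖)^2 := by ring
      _ = ((∏ j ∈ range n, (x+θ+j)^2) * (∏ j ∈ range n, (x+j)^2)) *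
            ∏ j ∈ range n, (1+y^2/(x+j)^2) := by
          rw [e1, ← Finset.prod_pow]; ring
      _ ≤ ((∏ j ∈ range n, (x+θ+j)^2) * (∏ j ∈ range n, (x+j)^2)) *
            (c^2 * ∏ j ∈ range n, (1+y^2/(x+θ+j)^2)) :=
          mul_le_mul_of_nonneg_left main' hPP
      _ = (c * ((∏ j ∈ range n, (x+j)) * ∏ j ∈ range n, ‖w+(θ:ℂ)+j‖))^2 := by
          rw [mul_pow, mul_pow, e2, ← Finset.prod_pow]; ring
  have hL : 0 ≤ (∏ j ∈ range n, (x+θ+j)) * ∏ j ∈ range n, ‖w+j‖ := by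
    apply mul_nonneg (Finset.prod_nonneg fun j _ => (hxθj j).le)
    exact Finset.prod_nonneg fun j _ => (norm_nonneg _)
  have hR : 0 ≤ c * ((∏ j ∈ range n, (x+j)) * ∏ j ∈ range n, ‖w+(θ:ℂ)+j‖) := by
    apply mul_nonneg hcpos.le
    apply mul_nonneg (Finset.prod_nonneg fun j _ => (hxj j).le)
    exact Finset.prod_nonneg fun j _ => (norm_nonneg _)
  calc (∏ j ∈ range n, (x+θ+j)) * ∏ j ∈ range n, ‖w+j‖
      = Real.sqrt (((∏ j ∈ range n, (x+θ+j)) * ∏ j ∈ range n, ‖w+j‖)^2) :=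
        (Real.sqrt_sq hL).symm
    _ ≤ Real.sqrt ((c * ((∏ j ∈ range n, (x+j)) * ∏ j ∈ range n, ‖w+(θ:ℂ)+j‖))^2) :=
        Real.sqrt_le_sqrt key
    _ = c * ((∏ j ∈ range n, (x+j)) * ∏ j ∈ range n, ‖w+(θ:ℂ)+j‖) :=
        Real.sqrt_sq hR

private lemma abs_GammaSeq (s : ℂ) {n : ℕ} (hn : 0 < n) :
    ‖Complex.GammaSeq s n‖ =
      (n:ℝ)^s.re * (n.factorial:ℝ) / ∏ j ∈ range (n+1), ‖s+j‖ := by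
  rw [Complex.GammaSeq, norm_div, norm_mul, norm_prod]
  congr 2
  · rw [← Complex.ofReal_natCast n, Complex.norm_cpow_eq_rpow_re_of_pos (by exact_mod_cast hn)]
  · exact Complex.norm_natCast _

private lemma Gamma_add_nat (w : ℂ) (n : ℕ) (h : ∀ k : ℕ, k < n → w + k ≠ 0) :
    Complex.Gamma (w + n) = (∏ k ∈ range n, (w + k)) * Complex.Gamma w := by
  induction n with
  | zero => simp
  | succ m ih =>
    have : w + (m+1 : ℕ) = (w + m) + 1 := by push_cast; ring
    rw [this, Complex.Gamma_add_one _ (h m (Nat.lt_succ_self m)),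
      ih (fun k hk => h k (hk.trans (Nat.lt_succ_self m))), Finset.prod_range_succ]
    ring

private lemma abs_Gamma_shift (w : ℂ) (hw : 2 ≤ w.re) {θ : ℝ} (hθ0 : 0 ≤ θ) (hθ1 : θ ≤ 1) :
    ‖Complex.Gamma (w + (θ:ℂ))‖ * Real.Gamma w.re ≤
      (1+|w.im|)^θ * (Real.Gamma (w.re + θ) * ‖Complex.Gamma w‖) := by
  set x := w.re with hx
  set y := w.im with hy
  have hx0 : (0:ℝ) < x := by linarith
  have hper : ∀ n : ℕ, 0 < n →
      ‖Complex.GammaSeq (w + (θ:ℂ)) n‖ * ‖Complex.GammaSeq ((x:ℂ)) n‖ ≤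
      (1+|y|)^θ * (‖Complex.GammaSeq (((x+θ:ℝ):ℂ)) n‖ *
        ‖Complex.GammaSeq w n‖) := by
    intro n hn
    have hre1 : (w + (θ:ℂ)).re = x + θ := by simp [hx]
    have hre2 : ((x:ℂ)).re = x := by simp
    have hre3 : (((x+θ:ℝ):ℂ)).re = x + θ := by simp
    rw [abs_GammaSeq _ hn, abs_GammaSeq _ hn, abs_GammaSeq _ hn, abs_GammaSeq _ hn,
      hre1, hre2, hre3]
    have hD2 : ∏ j ∈ range (n+1), ‖(x:ℂ)+j‖ = ∏ j ∈ range (n+1), (x+j) := by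
      refine Finset.prod_congr rfl fun j _ => ?_
      rw [← Complex.ofReal_natCast, ← Complex.ofReal_add, Complex.norm_real, Real.norm_eq_abs,
        abs_of_pos (by positivity)]
    have hD3 : ∏ j ∈ range (n+1), ‖((x+θ:ℝ):ℂ)+j‖ =
        ∏ j ∈ range (n+1), (x+θ+j) := by
      refine Finset.prod_congr rfl fun j _ => ?_
      rw [← Complex.ofReal_natCast, ← Complex.ofReal_add, Complex.norm_real, Real.norm_eq_abs,
        abs_of_pos (by positivity)]
    rw [hD2, hD3]
    have h5 := prod_abs_le w hw hθ0 hθ1 (n+1)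
    rw [← hx, ← hy] at h5
    have hA : (0:ℝ) < (n:ℝ)^(x+θ) * (n.factorial:ℝ) :=
      mul_pos (Real.rpow_pos_of_pos (by exact_mod_cast hn) _) (by exact_mod_cast n.factorial_pos)
    have hB : (0:ℝ) < (n:ℝ)^x * (n.factorial:ℝ) :=
      mul_pos (Real.rpow_pos_of_pos (by exact_mod_cast hn) _) (by exact_mod_cast n.factorial_pos)
    have hD1pos : (0:ℝ) < ∏ j ∈ range (n+1), ‖w+(θ:ℂ)+j‖ := by
      refine Finset.prod_pos fun j _ => ?_
      apply norm_pos_iff.mpr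
      intro hc
      have := congrArg Complex.re hc
      simp [hre1] at this
      have : x + θ + (j:ℝ) = 0 := by
        simpa [Complex.add_re] using this
      have hj : (0:ℝ) ≤ (j:ℝ) := Nat.cast_nonneg j
      linarith
    have hD4pos : (0:ℝ) < ∏ j ∈ range (n+1), ‖w+j‖ := by
      refine Finset.prod_pos fun j _ => ?_
      apply norm_pos_iff.mpr
      intro hc
      have := congrArg Complex.re hc
      have : x + (j:ℝ) = 0 := by
        simpa [Complex.add_re] using this
      have hj : (0:ℝ) ≤ (j:ℝ) := Nat.cast_nonneg j
      linarith
    have hD2pos : (0:ℝ) < ∏ j ∈ range (n+1), (x+(j:ℝ)) := by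
      refine Finset.prod_pos fun j _ => ?_
      have hj : (0:ℝ) ≤ (j:ℝ) := Nat.cast_nonneg j
      linarith
    have hD3pos : (0:ℝ) < ∏ j ∈ range (n+1), (x+θ+(j:ℝ)) := by
      refine Finset.prod_pos fun j _ => ?_
      have hj : (0:ℝ) ≤ (j:ℝ) := Nat.cast_nonneg j
      linarith
    rw [← hx]
    rw [div_mul_div_comm, div_mul_div_comm, mul_div_assoc',
      div_le_div_iff₀ (by positivity) (by positivity)]
    have H := mul_le_mul_of_nonneg_left h5
      (show (0:ℝ) ≤ (n:ℝ)^(x+θ) * (n.factorial:ℝ) * ((n:ℝ)^x * (n.factorial:ℝ)) by positivity)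
    calc ((n:ℝ)^(x+θ) * (n.factorial:ℝ) * ((n:ℝ)^x * (n.factorial:ℝ))) *
          ((∏ j ∈ range (n+1), (x+θ+j)) * ∏ j ∈ range (n+1), ‖w+j‖)
        ≤ ((n:ℝ)^(x+θ) * (n.factorial:ℝ) * ((n:ℝ)^x * (n.factorial:ℝ))) *
          ((1+|y|)^θ * ((∏ j ∈ range (n+1), (x+j)) *
            ∏ j ∈ range (n+1), ‖w+(θ:ℂ)+j‖)) := H
      _ = (1+|y|)^θ * ((n:ℝ)^(x+θ) * (n.factorial:ℝ) * ((n:ℝ)^x * (n.factorial:ℝ))) *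
          ((∏ j ∈ range (n+1), ‖w+(θ:ℂ)+j‖) * ∏ j ∈ range (n+1), (x+j)) := by
          ring
  -- pass to the limit
  have l1 : Tendsto (fun n => ‖Complex.GammaSeq (w + (θ:ℂ)) n‖ *
      ‖Complex.GammaSeq ((x:ℂ)) n‖) atTop
      (nhds (‖Complex.Gamma (w + (θ:ℂ))‖ * ‖Complex.Gamma ((x:ℂ))‖)) :=
    ((continuous_norm.tendsto _).comp (Complex.GammaSeq_tendsto_Gamma _)).mul
      ((continuous_norm.tendsto _).comp (Complex.GammaSeq_tendsto_Gamma _))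
  have l2 : Tendsto (fun n => (1+|y|)^θ * (‖Complex.GammaSeq (((x+θ:ℝ):ℂ)) n‖ *
      ‖Complex.GammaSeq w n‖)) atTop
      (nhds ((1+|y|)^θ * (‖Complex.Gamma (((x+θ:ℝ):ℂ))‖ *
        ‖Complex.Gamma w‖))) :=
    (tendsto_const_nhds.mul (((continuous_norm.tendsto _).comp
      (Complex.GammaSeq_tendsto_Gamma _)).mul
      ((continuous_norm.tendsto _).comp (Complex.GammaSeq_tendsto_Gamma _))))
  have lim := le_of_tendsto_of_tendsto l1 l2 (by
    filter_upwards [eventually_gt_atTop 0] with n hn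
    exact hper n hn)
  rw [Complex.Gamma_ofReal, Complex.Gamma_ofReal, Complex.norm_real, Complex.norm_real, Real.norm_eq_abs, Real.norm_eq_abs,
    abs_of_pos (Real.Gamma_pos_of_pos hx0), abs_of_pos (Real.Gamma_pos_of_pos (by positivity))]
    at lim
  exact lim

private lemma re_div_two (u : ℂ) : (u/2).re = u.re/2 := by
  rw [show (2:ℂ) = ((2:ℝ):ℂ) by norm_num, Complex.div_ofReal_re]

private lemma im_div_two (u : ℂ) : (u/2).im = u.im/2 := by
  rw [show (2:ℂ) = ((2:ℝ):ℂ) by norm_num, Complex.div_ofReal_im]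

/-- Bound for quotients of Archimedean factors `Γ_ℝ(w) = π^{-w/2} Γ(w/2)`:
for `-C ≤ Re s ≤ C`, `Re z ≤ C`, `Re(1 - s + z) ≥ ε > 0`,
`|Γ_ℝ(1 - s + conj z) / Γ_ℝ(s + z)| ≪_{ε,C} (1 + |Im(s+z)|)^{1/2 - Re s}`. -/
theorem gammaR_quotient_bound (ε C : ℝ) (hε : 0 < ε) :
    ∃ K : ℝ, 0 < K ∧
      ∀ s z : ℂ, s.re ≤ C → z.re ≤ C → -C ≤ s.re → ε ≤ (1 - s + z).re →
        norm
            (((Real.pi : ℂ) ^ (-(1 - s + starRingEnd ℂ z) / 2) *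
                Complex.Gamma ((1 - s + starRingEnd ℂ z) / 2)) /
              ((Real.pi : ℂ) ^ (-(s + z) / 2) * Complex.Gamma ((s + z) / 2))) ≤
          K * (1 + |(s + z).im|) ^ (1 / 2 - s.re) := by
  set e : ℝ := min ε 1 with he_def
  have he0 : 0 < e := lt_min hε one_pos
  have he1 : e ≤ 1 := min_le_right _ _
  have heε : e ≤ ε := min_le_left _ _
  set B : ℝ := max C 0 with hB_def
  have hBmax : B = max C 0 := hB_def
  have hB0 : 0 ≤ B := le_max_right _ _
  have hCB : C ≤ B := le_max_left _ _
  set N : ℕ := ⌈B⌉₊ + 3 with hN_def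
  have hNlb : B + 3 ≤ (N:ℝ) := by
    have := Nat.le_ceil B
    push_cast [hN_def]
    linarith
  have hNub : (N:ℝ) ≤ B + 4 := by
    have := Nat.ceil_lt_add_one hB0
    push_cast [hN_def]
    linarith
  set J : ℕ := 2 * ⌈B⌉₊ + 6 with hJ_def
  have hJlb : 2 * B + 6 ≤ (J:ℝ) := by
    have := Nat.le_ceil B
    push_cast [hJ_def]
    linarith
  set KA : ℝ := Real.Gamma (3*B+8) with hKA_def
  have hKApos : 0 < KA := Real.Gamma_pos_of_pos (by linarith)
  set c2 : ℝ := 3*B+6 with hc2_def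
  have hc2pos : 0 < c2 := by linarith
  refine ⟨Real.pi ^ (B+1) * (KA * c2^N * (4/e)^J),
    mul_pos (Real.rpow_pos_of_pos Real.pi_pos _) (mul_pos (mul_pos hKApos (pow_pos hc2pos _))
      (pow_pos (div_pos (by norm_num) he0) _)), ?_⟩
  intro s z hs hz hs' hsz
  set K : ℝ := Real.pi ^ (B+1) * (KA * c2^N * (4/e)^J) with hK_def
  have hKpos : 0 < K := by
    rw [hK_def]
    exact mul_pos (Real.rpow_pos_of_pos Real.pi_pos _)
      (mul_pos (mul_pos hKApos (pow_pos hc2pos _)) (pow_pos (div_pos (by norm_num) he0) _))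
  clear_value K
  set δ : ℝ := 1/2 - s.re with hδ_def
  set t : ℝ := (s+z).im with ht_def
  set Y : ℝ := 1 + |t| with hY_def
  clear_value δ t Y
  have hYpos : 0 < Y := by rw [hY_def]; positivity
  have hY1 : 1 ≤ Y := by rw [hY_def]; have := abs_nonneg t; linarith
  clear_value e B N J KA c2
  -- basic real bounds
  have hsB : s.re ≤ B := le_trans hs hCB
  have hsB' : -B ≤ s.re := by
    have : -B ≤ -C := by linarith
    linarith
  have hzB : z.re ≤ B := le_trans hz hCB
  have hsz' : ε ≤ 1 - s.re + z.re := by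
    have : (1 - s + z).re = 1 - s.re + z.re := by simp
    linarith [hsz, this.symm.le]
  have hzlb : -1 - B ≤ z.re := by linarith
  set q : ℂ := (s+z)/2 with hq_def
  clear_value q
  have hq_re : q.re = (s.re + z.re)/2 := by
    rw [hq_def, re_div_two, Complex.add_re]
  have hq_im : q.im = t/2 := by
    rw [ht_def, Complex.add_im, hq_def, im_div_two, Complex.add_im]
  have hq_re_lb : -(B+1) ≤ q.re := by rw [hq_re]; linarith
  have hq_re_ub : q.re ≤ B := by rw [hq_re]; linarith
  have hδub : δ ≤ B + 1/2 := by rw [hδ_def]; linarith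
  have hδlb : -B - 1/2 ≤ δ := by rw [hδ_def]; linarith
  -- floor/fract of δ
  set θ : ℝ := Int.fract δ with hθ_def
  have hθ0 : 0 ≤ θ := Int.fract_nonneg δ
  have hθ1 : θ < 1 := Int.fract_lt_one δ
  clear_value θ
  set m : ℤ := ⌊δ⌋ with hm_def
  have hmθ : (m:ℝ) = δ - θ := by
    have h := Int.floor_add_fract δ
    rw [hm_def]
    rw [hθ_def]
    linarith
  clear_value m
  -- j
  have hmltN : m < (N:ℤ) := by
    have h1 : (m:ℝ) ≤ δ := by rw [hmθ]; linarith
    have : (m:ℝ) < (N:ℝ) := by linarith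
    exact_mod_cast this
  set j : ℕ := ((N:ℤ) - m).toNat with hj_def
  have hj : (j:ℝ) = (N:ℝ) - (m:ℝ) := by
    have hz : ((j:ℤ)) = (N:ℤ) - m := by
      rw [hj_def]; exact Int.toNat_of_nonneg (by omega)
    have := congrArg (fun a : ℤ => (a:ℝ)) hz
    push_cast at this
    linarith
  clear_value j
  have hjJ : j ≤ J := by
    have h1 : (j:ℝ) ≤ (J:ℝ) := by
      rw [hj]
      have : (m:ℝ) ≥ δ - 1 := by rw [hmθ]; linarith
      linarith
    exact_mod_cast h1
  -- the Gamma = 0 degenerate case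
  have hYδnn : (0:ℝ) ≤ Y ^ δ := Real.rpow_nonneg hYpos.le δ
  by_cases hΓq : Complex.Gamma q = 0
  · rw [hΓq, mul_zero, div_zero, norm_zero]
    exact mul_nonneg hKpos.le hYδnn
  have hGqpos : 0 < ‖Complex.Gamma q‖ := norm_pos_iff.mpr hΓq
  -- v
  set v : ℂ := q + (δ:ℂ) with hv_def
  clear_value v
  have hv_re : v.re = q.re + δ := by simp [hv_def]
  have hv_im : v.im = t/2 := by simp [hv_def, hq_im]
  have hv_re_lb : e/2 ≤ v.re := by rw [hv_re, hq_re, hδ_def]; linarith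
  have hv_re_ub : v.re ≤ B + 1 := by rw [hv_re, hq_re, hδ_def]; linarith
  have hYθnn : (0:ℝ) ≤ Y ^ θ := Real.rpow_nonneg hYpos.le θ
  -- conjugation identity
  have hp_eq : (1 - s + starRingEnd ℂ z)/2 = starRingEnd ℂ v := by
    rw [hv_def, hq_def, map_add, map_div₀, map_add, Complex.conj_ofReal]
    rw [map_ofNat]
    rw [hδ_def]
    push_cast
    have hconj := Complex.add_conj s
    push_cast at hconj
    linear_combination -hconj/2
  have hΓp_abs : ‖Complex.Gamma ((1 - s + starRingEnd ℂ z)/2)‖ =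
      ‖Complex.Gamma v‖ := by
    rw [hp_eq, Complex.Gamma_conj, Complex.norm_conj]
  -- recurrences
  have hrec_v : Complex.Gamma (v + (j:ℕ)) = (∏ k ∈ range j, (v + k)) * Complex.Gamma v := by
    apply Gamma_add_nat
    intro k hk hzero
    have h1 : (v + (k:ℂ)).re = v.re + k := by simp
    rw [hzero] at h1
    simp at h1
    have : (0:ℝ) ≤ (k:ℝ) := Nat.cast_nonneg k
    linarith
  have hrec_q : Complex.Gamma (q + (N:ℕ)) = (∏ k ∈ range N, (q + k)) * Complex.Gamma q := by
    apply Gamma_add_nat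
    intro k hk hzero
    have hqk : q = -(k:ℂ) := by linear_combination hzero
    exact hΓq (by rw [hqk]; exact Complex.Gamma_neg_nat_eq_zero k)
  have hvj : v + (j:ℂ) = q + (N:ℂ) + (θ:ℂ) := by
    have hreal : δ + (j:ℝ) = (N:ℝ) + θ := by rw [hj]; linarith
    have hc : ((δ + (j:ℝ) : ℝ) : ℂ) = (((N:ℝ) + θ : ℝ) : ℂ) :=
      congrArg (fun r : ℝ => (r:ℂ)) hreal
    push_cast at hc
    rw [hv_def]
    push_cast
    linear_combination hc
  -- lower bound on the ∏ |v+k|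
  have hlb : ∀ k ∈ range j, (e/4) * Y ≤ ‖v + k‖ := by
    intro k _
    have h1 : v.re + k ≤ ‖v + k‖ := by
      have := Complex.re_le_norm (v + k)
      simpa using this
    have h2 : |t|/2 ≤ ‖v + k‖ := by
      have := Complex.abs_im_le_norm (v + k)
      have h3 : (v + (k:ℂ)).im = t/2 := by simp [hv_im]
      rw [h3, abs_div] at this
      simpa using this
    have hk0 : (0:ℝ) ≤ (k:ℝ) := Nat.cast_nonneg k
    have ht0 : 0 ≤ |t| := abs_nonneg t
    rw [hY_def]
    linarith [mul_nonneg (sub_nonneg.mpr he1) ht0, hv_re_lb]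
  have hprod_lb : ((e/4) * Y)^j ≤ ∏ k ∈ range j, ‖v + k‖ := by
    calc ((e/4) * Y)^j = ∏ _k ∈ range j, ((e/4) * Y) := by rw [prod_const, card_range]
      _ ≤ ∏ k ∈ range j, ‖v + k‖ :=
          Finset.prod_le_prod (fun _ _ => mul_nonneg (by linarith) hYpos.le) hlb
  -- upper bound on the ∏ |q+k|
  have hub : ∀ k ∈ range N, ‖q + k‖ ≤ c2 * Y := by
    intro k hk
    have hkN : (k:ℝ) ≤ (N:ℝ) - 1 := by
      have : k + 1 ≤ N := Finset.mem_range.mp hk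
      have := (Nat.cast_le (α := ℝ)).mpr this
      push_cast at this
      linarith
    have hk0 : (0:ℝ) ≤ (k:ℝ) := Nat.cast_nonneg k
    have h1 : ‖q + k‖ ≤ |(q + (k:ℂ)).re| + |(q + (k:ℂ)).im| :=
      Complex.norm_le_abs_re_add_abs_im _
    have h2 : (q + (k:ℂ)).re = q.re + k := by simp
    have h3 : (q + (k:ℂ)).im = t/2 := by simp [hq_im]
    rw [h2, h3, abs_div] at h1
    have h4 : |q.re + (k:ℝ)| ≤ 2*B + 3 := by
      rw [abs_le]
      constructor <;> [linarith; linarith]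
    have ht0 : 0 ≤ |t| := abs_nonneg t
    have h5 : |(2:ℝ)| = 2 := by norm_num
    rw [h5] at h1
    rw [hY_def, hc2_def]
    linarith [mul_nonneg hB0 ht0]
  have hprod_ub : ∏ k ∈ range N, ‖q + k‖ ≤ (c2 * Y)^N := by
    calc ∏ k ∈ range N, ‖q + k‖ ≤ ∏ _k ∈ range N, (c2 * Y) :=
          Finset.prod_le_prod (fun _ _ => norm_nonneg _) hub
      _ = (c2 * Y)^N := by rw [prod_const, card_range]
  -- step (6)
  have hqN_re : (q + (N:ℂ)).re = q.re + N := by simp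
  have hqN_im : (q + (N:ℂ)).im = t/2 := by simp [hq_im]
  have h2qN : 2 ≤ (q + (N:ℂ)).re := by rw [hqN_re]; linarith
  have hmono : MonotoneOn Real.Gamma (Set.Ici 2) := Real.Gamma_strictMonoOn_Ici.monotoneOn
  have hshift := abs_Gamma_shift (q + (N:ℂ)) h2qN hθ0 hθ1.le
  have hG1 : (1:ℝ) ≤ Real.Gamma ((q + (N:ℂ)).re) := by
    have := hmono (Set.mem_Ici.mpr le_rfl) (Set.mem_Ici.mpr h2qN) h2qN
    rw [Real.Gamma_two] at this
    exact this
  have hGKA : Real.Gamma ((q + (N:ℂ)).re + θ) ≤ KA := by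
    rw [hKA_def]
    apply hmono (Set.mem_Ici.mpr (by linarith)) (Set.mem_Ici.mpr (by linarith))
    rw [hqN_re]
    linarith
  have hYθ : (1 + |(q + (N:ℂ)).im|)^θ ≤ Y^θ := by
    apply Real.rpow_le_rpow (by positivity) _ hθ0
    rw [hqN_im, hY_def, abs_div]
    have := abs_nonneg t
    have h5 : |(2:ℝ)| = 2 := by norm_num
    rw [h5]
    linarith
  have hstep6 : ‖Complex.Gamma (q + (N:ℂ) + (θ:ℂ))‖ ≤
      Y^θ * (KA * ‖Complex.Gamma (q + (N:ℂ))‖) := by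
    calc ‖Complex.Gamma (q + (N:ℂ) + (θ:ℂ))‖
        = ‖Complex.Gamma (q + (N:ℂ) + (θ:ℂ))‖ * 1 := (mul_one _).symm
      _ ≤ ‖Complex.Gamma (q + (N:ℂ) + (θ:ℂ))‖ * Real.Gamma ((q + (N:ℂ)).re) :=
          mul_le_mul_of_nonneg_left hG1 (norm_nonneg _)
      _ ≤ (1 + |(q + (N:ℂ)).im|)^θ * (Real.Gamma ((q + (N:ℂ)).re + θ) *
            ‖Complex.Gamma (q + (N:ℂ))‖) := hshift
      _ ≤ Y^θ * (KA * ‖Complex.Gamma (q + (N:ℂ))‖) := by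
          apply mul_le_mul hYθ _ _ hYθnn
          · exact mul_le_mul_of_nonneg_right hGKA (norm_nonneg _)
          · exact mul_nonneg (Real.Gamma_pos_of_pos (by linarith)).le (norm_nonneg _)
  -- step (7)
  have hstep7 : ‖Complex.Gamma (q + (N:ℂ))‖ ≤
      (c2 * Y)^N * ‖Complex.Gamma q‖ := by
    rw [hrec_q, norm_mul, norm_prod]
    exact mul_le_mul_of_nonneg_right hprod_ub (norm_nonneg _)
  -- exponent juggling
  have hYexp : Y^θ * (Y:ℝ)^(N:ℕ) = Y^δ * Y^(j:ℕ) := by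
    rw [← Real.rpow_natCast Y N, ← Real.rpow_natCast Y j, ← Real.rpow_add hYpos,
      ← Real.rpow_add hYpos]
    congr 1
    rw [hj]
    linarith only [hmθ]
  have hfac : (1:ℝ) ≤ (4/e)^J * (e/4)^j := by
    have h1 : (4/e)^j ≤ (4/e)^J :=
      pow_le_pow_right₀ (by rw [le_div_iff₀ he0]; linarith) hjJ
    have h2 : (0:ℝ) < (e/4)^j := pow_pos (div_pos he0 (by norm_num)) j
    have h3 : (4/e)^j * (e/4)^j = 1 := by
      rw [← mul_pow]
      rw [show (4/e) * (e/4) = 1 by field_simp]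
      exact one_pow j
    calc (1:ℝ) = (4/e)^j * (e/4)^j := h3.symm
      _ ≤ (4/e)^J * (e/4)^j := mul_le_mul_of_nonneg_right h1 h2.le
  -- main chain
  have h8 : ‖Complex.Gamma v‖ * ((e/4)^j * Y^(j:ℕ)) ≤
      (KA * c2^N * (4/e)^J * Y^δ * ‖Complex.Gamma q‖) * ((e/4)^j * Y^(j:ℕ)) := by
    calc ‖Complex.Gamma v‖ * ((e/4)^j * Y^(j:ℕ))
        = ‖Complex.Gamma v‖ * ((e/4) * Y)^j := by rw [mul_pow]
      _ ≤ ‖Complex.Gamma v‖ * ∏ k ∈ range j, ‖v + k‖ :=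
          mul_le_mul_of_nonneg_left hprod_lb (norm_nonneg _)
      _ = ‖Complex.Gamma (v + (j:ℕ))‖ := by
          rw [hrec_v, norm_mul, norm_prod]; ring
      _ = ‖Complex.Gamma (q + (N:ℂ) + (θ:ℂ))‖ := by rw [hvj]
      _ ≤ Y^θ * (KA * ‖Complex.Gamma (q + (N:ℂ))‖) := hstep6
      _ ≤ Y^θ * (KA * ((c2 * Y)^N * ‖Complex.Gamma q‖)) := by
          apply mul_le_mul_of_nonneg_left _ hYθnn
          exact mul_le_mul_of_nonneg_left hstep7 hKApos.le
      _ = (KA * c2^N * ‖Complex.Gamma q‖) * (Y^θ * Y^(N:ℕ)) := by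
          rw [mul_pow]; ring
      _ = (KA * c2^N * ‖Complex.Gamma q‖) * (Y^δ * Y^(j:ℕ)) := by rw [hYexp]
      _ ≤ (KA * c2^N * ‖Complex.Gamma q‖) *
            (((4/e)^J * (e/4)^j) * (Y^δ * Y^(j:ℕ))) := by
          apply mul_le_mul_of_nonneg_left _
            (mul_nonneg (mul_nonneg hKApos.le (pow_nonneg hc2pos.le _)) (norm_nonneg _))
          exact le_mul_of_one_le_left (mul_nonneg hYδnn (pow_nonneg hYpos.le _)) hfac
      _ = (KA * c2^N * (4/e)^J * Y^δ * ‖Complex.Gamma q‖) *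
            ((e/4)^j * Y^(j:ℕ)) := by ring
  have hmid : ‖Complex.Gamma v‖ ≤
      KA * c2^N * (4/e)^J * Y^δ * ‖Complex.Gamma q‖ :=
    le_of_mul_le_mul_right h8
      (mul_pos (pow_pos (div_pos he0 (by norm_num)) _) (pow_pos hYpos _))
  -- the π factor
  have hπre1 : ((-(1 - s + starRingEnd ℂ z)) / 2).re = (s.re - 1 - z.re)/2 := by
    rw [re_div_two]
    simp
    ring
  have hπre2 : ((-(s + z)) / 2).re = (-s.re - z.re)/2 := by
    rw [re_div_two]
    simp
    ring
  have hπbound : Real.pi ^ (((-(1 - s + starRingEnd ℂ z)) / 2).re) /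
      Real.pi ^ (((-(s + z)) / 2).re) ≤ Real.pi ^ (B+1) := by
    rw [← Real.rpow_sub Real.pi_pos, hπre1, hπre2]
    apply Real.rpow_le_rpow_of_exponent_le (by linarith [Real.pi_gt_three])
    linarith
  -- final computation
  rw [norm_div, norm_mul, norm_mul, Complex.norm_cpow_eq_rpow_re_of_pos Real.pi_pos,
    Complex.norm_cpow_eq_rpow_re_of_pos Real.pi_pos, hΓp_abs]
  calc Real.pi ^ (((-(1 - s + starRingEnd ℂ z)) / 2).re) * ‖Complex.Gamma v‖ /
        (Real.pi ^ (((-(s + z)) / 2).re) * ‖Complex.Gamma q‖)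
      = (Real.pi ^ (((-(1 - s + starRingEnd ℂ z)) / 2).re) /
          Real.pi ^ (((-(s + z)) / 2).re)) *
        (‖Complex.Gamma v‖ / ‖Complex.Gamma q‖) := by
        rw [mul_div_mul_comm]
    _ ≤ Real.pi ^ (B+1) * (KA * c2^N * (4/e)^J * Y^δ) := by
        apply mul_le_mul hπbound _ (div_nonneg (norm_nonneg _) (norm_nonneg _))
          (Real.rpow_nonneg Real.pi_pos.le _)
        rw [div_le_iff₀ hGqpos]
        exact hmid
    _ = K * Y^δ := by rw [hK_def]; ring
end
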